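/- arXiv:1511.04144 — 4 statements merged into one kernel-verified Lean document; each statement's English description precedes it below -/
import Mathlib

section
/- Let P₀ and P₁ be probability measures on a measurable space and let A be a measurable set achieving the total variation distance, i.e., P₀(A) − P₁(A) = TV(P₀,P₁). Let X₁,…,Xₙ be i.i.d. with common distribution P satisfying TV(P,P₀) ≤ ξ, and let Pₙ(A) = (1/n)∑ᵢ 1{Xᵢ∈A}. If TV(P₀,P₁) > 2ξ, then the probability that |Pₙ(A) − P₀(A)| > |Pₙ(A) − P₁(A)| is at most 2·exp(−(n/2)·(TV(P₀,P₁) − 2ξ)²). -/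
open MeasureTheory ProbabilityTheory Real

/-- Total variation distance between two measures: supremum over measurable sets of
the absolute difference of their (real-valued) masses. -/
noncomputable def tvDist {Ω : Type*} [MeasurableSpace Ω] (P Q : Measure Ω) : ℝ :=
  ⨆ B : {B : Set Ω // MeasurableSet B}, |(P B.1).toReal - (Q B.1).toReal|


lemma bern_log_le {p : ℝ} (hp0 : 0 ≤ p) (hp1 : p ≤ 1) (t : ℝ) :
    -(t * p) + Real.log (1 - p + p * Real.exp t) ≤ t ^ 2 / 8 := by
  have hd : ∀ s : ℝ, 0 < 1 - p + p * Real.exp s := by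
    intro s
    rcases eq_or_lt_of_le hp0 with h | h
    · simp [← h]
    · nlinarith [exp_pos s]
  set F : ℝ → ℝ := fun s => s ^ 2 / 8 - (-(s * p) + Real.log (1 - p + p * Real.exp s)) with hF
  set F1 : ℝ → ℝ := fun s => s / 4 - (-p + p * Real.exp s / (1 - p + p * Real.exp s)) with hF1
  have hd' : ∀ s : ℝ, HasDerivAt (fun s => 1 - p + p * Real.exp s) (p * Real.exp s) s := by
    intro s
    exact ((Real.hasDerivAt_exp s).const_mul p).const_add (1 - p)
  have hF' : ∀ s : ℝ, HasDerivAt F (F1 s) s := by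
    intro s
    have h1 : HasDerivAt (fun s : ℝ => s ^ 2 / 8) (s / 4) s := by
      have := (hasDerivAt_pow 2 s).div_const 8
      exact this.congr_deriv (by push_cast; ring)
    have h2 : HasDerivAt (fun s : ℝ => -(s * p)) (-p) s := by
      have := ((hasDerivAt_id s).mul_const p).neg
      exact this.congr_deriv (by ring)
    have h3 : HasDerivAt (fun s => Real.log (1 - p + p * Real.exp s))
        (p * Real.exp s / (1 - p + p * Real.exp s)) s := (hd' s).log (hd s).ne'
    exact h1.sub (h2.add h3)
  have hF1' : ∀ s : ℝ, HasDerivAt F1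
      (1 / 4 - p * Real.exp s * (1 - p) / (1 - p + p * Real.exp s) ^ 2) s := by
    intro s
    have h1 : HasDerivAt (fun s : ℝ => s / 4) (1 / 4) s := (hasDerivAt_id s).div_const 4
    have h2 : HasDerivAt (fun s => p * Real.exp s / (1 - p + p * Real.exp s))
        ((p * Real.exp s * (1 - p + p * Real.exp s) - p * Real.exp s * (p * Real.exp s)) /
          (1 - p + p * Real.exp s) ^ 2) s :=
      ((Real.hasDerivAt_exp s).const_mul p).div (hd' s) (hd s).ne'
    have h2' : HasDerivAt (fun s => p * Real.exp s / (1 - p + p * Real.exp s))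
        (p * Real.exp s * (1 - p) / (1 - p + p * Real.exp s) ^ 2) s := by
      convert h2 using 1; ring
    have h3 := h1.sub ((hasDerivAt_const s (-p)).add h2')
    exact h3.congr_deriv (by ring)
  have hF2 : ∀ s : ℝ, 0 ≤ 1 / 4 - p * Real.exp s * (1 - p) / (1 - p + p * Real.exp s) ^ 2 := by
    intro s
    rw [sub_nonneg, div_le_iff₀ (pow_pos (hd s) 2)]
    nlinarith [sq_nonneg ((1 - p) - p * Real.exp s), exp_pos s]
  have hF1mono : Monotone F1 :=
    monotone_of_deriv_nonneg (fun s => (hF1' s).differentiableAt)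
      (fun s => by rw [(hF1' s).deriv]; exact hF2 s)
  have hF10 : F1 0 = 0 := by
    simp [hF1, Real.exp_zero]
  have hF0 : F 0 = 0 := by
    simp [hF]
  have hFnonneg : 0 ≤ F t := by
    rcases le_or_gt 0 t with h | h
    · have hmono : MonotoneOn F (Set.Ici 0) := by
        apply monotoneOn_of_deriv_nonneg (convex_Ici 0)
          (Continuous.continuousOn
            (Differentiable.continuous (fun s => (hF' s).differentiableAt)))
          (fun s _ => ((hF' s).differentiableAt).differentiableWithinAt)
        intro s hs
        rw [(hF' s).deriv, ← hF10]
        exact hF1mono (le_of_lt (by simpa using hs))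
      have := hmono (Set.self_mem_Ici) (Set.mem_Ici.mpr h) h
      linarith [hF0 ▸ this]
    · have hanti : AntitoneOn F (Set.Iic 0) := by
        apply antitoneOn_of_deriv_nonpos (convex_Iic 0)
          (Continuous.continuousOn
            (Differentiable.continuous (fun s => (hF' s).differentiableAt)))
          (fun s _ => ((hF' s).differentiableAt).differentiableWithinAt)
        intro s hs
        rw [(hF' s).deriv, ← hF10]
        exact hF1mono (le_of_lt (by simpa using hs))
      have := hanti (Set.mem_Iic.mpr h.le) (Set.self_mem_Iic) h.le
      linarith [hF0 ▸ this]
  have heq : F t = t ^ 2 / 8 - (-(t * p) + Real.log (1 - p + p * Real.exp t)) := rfl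
  rw [heq] at hFnonneg
  linarith

open MeasureTheory in
lemma coord_bound {Ω : Type*} [MeasurableSpace Ω] (P : Measure Ω) [IsProbabilityMeasure P]
    (A : Set Ω) (hA : MeasurableSet A) (t : ℝ) :
    Integrable (fun y => Real.exp (t * ((P A).toReal - A.indicator (fun _ => (1:ℝ)) y))) P ∧
    ∫ y, Real.exp (t * ((P A).toReal - A.indicator (fun _ => (1:ℝ)) y)) ∂P
      ≤ Real.exp (t ^ 2 / 8) := by
  set p := (P A).toReal with hp
  have hp0 : 0 ≤ p := ENNReal.toReal_nonneg
  have hp1 : p ≤ 1 := by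
    rw [hp]
    exact ENNReal.toReal_le_of_le_ofReal one_pos.le (by simpa using prob_le_one)
  have hfun : (fun y => Real.exp (t * (p - A.indicator (fun _ => (1:ℝ)) y))) =
      fun y => Real.exp (t * p) *
        (1 + (Real.exp (-t) - 1) * A.indicator (fun _ => (1:ℝ)) y) := by
    funext y
    by_cases hy : y ∈ A
    · rw [Set.indicator_of_mem hy]
      have h1 : (1:ℝ) + (Real.exp (-t) - 1) * 1 = Real.exp (-t) := by ring
      rw [h1, ← Real.exp_add]
      congr 1; ring
    · rw [Set.indicator_of_notMem hy]
      have h1 : (1:ℝ) + (Real.exp (-t) - 1) * 0 = 1 := by ring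
      rw [h1, mul_one]
      congr 1; ring
  have hind : Integrable (A.indicator (fun _ => (1:ℝ))) P := (integrable_const (1:ℝ)).indicator hA
  have hint2 : Integrable
      (fun y => (1:ℝ) + (Real.exp (-t) - 1) * A.indicator (fun _ => (1:ℝ)) y) P :=
    (integrable_const (1:ℝ)).add (hind.const_mul _)
  constructor
  · rw [hfun]; exact hint2.const_mul _
  · rw [hfun, integral_const_mul, integral_add (integrable_const 1) (hind.const_mul _),
      integral_const, integral_const_mul, integral_indicator_const _ hA]
    simp only [Measure.real, measure_univ, ENNReal.toReal_one, smul_eq_mul, mul_one, one_mul]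
    have key := bern_log_le hp0 hp1 (-t)
    have hd : 0 < 1 - p + p * Real.exp (-t) := by
      rcases eq_or_lt_of_le hp0 with h | h
      · simp [← h]
      · nlinarith [Real.exp_pos (-t)]
    have : Real.exp (t * p) * (1 + (Real.exp (-t) - 1) * p)
        = Real.exp (-(-t * p)) * (1 - p + p * Real.exp (-t)) := by
      congr 1
      · congr 1; ring
      · ring
    rw [this, ← Real.exp_log hd, ← Real.exp_add]
    rw [show (-t) ^ 2 = t ^ 2 by ring] at key
    exact Real.exp_le_exp.mpr key

private lemma abs_le_tvDistAux {Ω : Type*} [MeasurableSpace Ω] (P Q : MeasureTheory.Measure Ω)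
    [MeasureTheory.IsProbabilityMeasure P] [MeasureTheory.IsProbabilityMeasure Q]
    {B : Set Ω} (hB : MeasurableSet B) :
    |(P B).toReal - (Q B).toReal| ≤ tvDist P Q := by
  have hbdd : BddAbove (Set.range fun B : {B : Set Ω // MeasurableSet B} =>
      |(P B.1).toReal - (Q B.1).toReal|) := by
    refine ⟨2, ?_⟩
    rintro x ⟨C, rfl⟩
    have h1 : (P C.1).toReal ≤ 1 :=
      ENNReal.toReal_le_of_le_ofReal one_pos.le (by simpa using MeasureTheory.prob_le_one)
    have h2 : (Q C.1).toReal ≤ 1 :=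
      ENNReal.toReal_le_of_le_ofReal one_pos.le (by simpa using MeasureTheory.prob_le_one)
    have h3 : (0:ℝ) ≤ (P C.1).toReal := ENNReal.toReal_nonneg
    have h4 : (0:ℝ) ≤ (Q C.1).toReal := ENNReal.toReal_nonneg
    exact abs_le.mpr ⟨by linarith, by linarith⟩
  exact le_ciSup hbdd ⟨B, hB⟩



/-- If `A` achieves the total variation distance between `P₀` and `P₁`,
`X₁,…,Xₙ` are i.i.d. from `P` with `TV(P,P₀) ≤ ξ`, and `TV(P₀,P₁) > 2ξ`, then the
probability that the empirical frequency of `A` is closer to `P₁(A)` than to `P₀(A)`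
is at most `2 exp(-(n/2)(TV(P₀,P₁)-2ξ)²)`. -/
theorem stmt0 {Ω : Type*} [MeasurableSpace Ω]
    (P₀ P₁ P : Measure Ω) [IsProbabilityMeasure P₀] [IsProbabilityMeasure P₁]
    [IsProbabilityMeasure P]
    (A : Set Ω) (hA : MeasurableSet A)
    (hAmax : (P₀ A).toReal - (P₁ A).toReal = tvDist P₀ P₁)
    (ξ : ℝ) (hξ : tvDist P P₀ ≤ ξ)
    (n : ℕ) (hn : 0 < n)
    (hgap : tvDist P₀ P₁ > 2 * ξ) :
    ((Measure.pi (fun _ : Fin n => P))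
      {x | |(∑ i, A.indicator (fun _ => (1:ℝ)) (x i)) / n - (P₀ A).toReal|
            > |(∑ i, A.indicator (fun _ => (1:ℝ)) (x i)) / n - (P₁ A).toReal|}).toReal
      ≤ 2 * Real.exp (-((n : ℝ) / 2) * (tvDist P₀ P₁ - 2 * ξ) ^ 2) := by
  classical
  set f : Ω → ℝ := A.indicator (fun _ => (1:ℝ)) with hf
  set q₀ := (P₀ A).toReal with hq₀
  set q₁ := (P₁ A).toReal with hq₁
  set τ := tvDist P₀ P₁ with hτdef
  set ε := (τ - 2 * ξ) / 2 with hε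
  set p := (P A).toReal with hp
  have hξ0 : 0 ≤ ξ := by
    refine le_trans ?_ hξ
    have h := abs_le_tvDistAux P P₀ MeasurableSet.empty
    simpa using h
  have hεpos : 0 < ε := by rw [hε]; linarith
  have hpq : |p - q₀| ≤ ξ := le_trans (abs_le_tvDistAux P P₀ hA) hξ
  set t : ℝ := 4 * ε with ht
  letI : MeasureSpace Ω := ⟨P⟩
  set μ : Measure (Fin n → Ω) := Measure.pi (fun _ : Fin n => P) with hμ
  haveI : IsProbabilityMeasure μ := by rw [hμ]; infer_instance
  set X : (Fin n → Ω) → ℝ := fun x => ∑ i, (p - f (x i)) with hX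
  have hXeq : ∀ x, X x = n * p - ∑ i, f (x i) := by
    intro x
    show ∑ i : Fin n, (p - f (x i)) = _
    rw [Finset.sum_sub_distrib, Finset.sum_const, Finset.card_univ, Fintype.card_fin,
      nsmul_eq_mul]
  have hprod : (fun x : Fin n → Ω => Real.exp (t * X x)) =
      fun x => ∏ i, Real.exp (t * (p - f (x i))) := by
    funext x
    rw [hX, Finset.mul_sum, Real.exp_sum]
  have hco := coord_bound P A hA t
  rw [← hp, ← hf] at hco
  have h_int : Integrable (fun x => Real.exp (t * X x)) μ := by
    rw [hprod]
    exact Integrable.fintype_prod (f := fun (_ : Fin n) y => Real.exp (t * (p - f y)))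
      (fun _ => hco.1)
  have hvnonneg : 0 ≤ ∫ y, Real.exp (t * (p - f y)) ∂P :=
    integral_nonneg fun y => (Real.exp_pos _).le
  have hmgf : mgf X μ t ≤ Real.exp (t ^ 2 / 8) ^ n := by
    have h1 : mgf X μ t = (∫ y, Real.exp (t * (p - f y)) ∂P) ^ n := by
      rw [mgf]
      calc ∫ x, Real.exp (t * X x) ∂μ
          = ∫ x : Fin n → Ω, ∏ i, Real.exp (t * (p - f (x i))) ∂μ := by rw [hprod]
        _ = (∫ y, Real.exp (t * (p - f y)) ∂P) ^ n := by
            have h2 := MeasureTheory.integral_fintype_prod_eq_pow (E := Ω) (ι := Fin n) (μ := P)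
              (fun y => Real.exp (t * (p - f y)))
            simpa [Fintype.card_fin] using h2
    rw [h1]
    exact pow_le_pow_left₀ hvnonneg hco.2 n
  have hch := measure_ge_le_exp_mul_mgf (μ := μ) (X := X) (t := t) ((n : ℝ) * ε)
    (by linarith) h_int
  have hsub : {x : Fin n → Ω | |(∑ i, f (x i)) / n - q₀| > |(∑ i, f (x i)) / n - q₁|}
      ⊆ {x | (n : ℝ) * ε ≤ X x} := by
    intro x hx
    simp only [Set.mem_setOf_eq] at hx ⊢
    have hn' : (0:ℝ) < n := by exact_mod_cast hn
    set m := (∑ i, f (x i)) / n with hm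
    have hS : (∑ i, f (x i)) = n * m := by
      rw [hm]; field_simp
    have hsq : (m - q₁) ^ 2 < (m - q₀) ^ 2 := by
      have h := mul_self_lt_mul_self (abs_nonneg _) hx
      rw [abs_mul_abs_self, abs_mul_abs_self] at h
      nlinarith [h]
    have hqq : q₀ - q₁ = τ := hAmax
    have habs := abs_le.mp hpq
    have hτpos : 0 < τ := by linarith
    have hc : 0 < q₀ - q₁ := by rw [hqq]; exact hτpos
    have h2m : 2 * m < q₀ + q₁ := by nlinarith [hsq, hc]
    have hpm : ε ≤ p - m := by
      rw [hε]
      linarith [habs.1]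
    rw [hXeq, hS]
    have hmm := mul_le_mul_of_nonneg_left hpm hn'.le
    have hrr : (n : ℝ) * (p - m) = n * p - n * m := by ring
    linarith
  calc (μ {x : Fin n → Ω | |(∑ i, f (x i)) / n - q₀| > |(∑ i, f (x i)) / n - q₁|}).toReal
      ≤ (μ {x | (n : ℝ) * ε ≤ X x}).toReal :=
        ENNReal.toReal_mono (measure_ne_top μ _) (measure_mono hsub)
    _ ≤ Real.exp (-t * ((n : ℝ) * ε)) * mgf X μ t := hch
    _ ≤ Real.exp (-t * ((n : ℝ) * ε)) * Real.exp (t ^ 2 / 8) ^ n := by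
        exact mul_le_mul_of_nonneg_left hmgf (Real.exp_pos _).le
    _ = Real.exp (-((n : ℝ) / 2) * (τ - 2 * ξ) ^ 2) := by
        rw [← Real.exp_nat_mul, ← Real.exp_add]
        congr 1
        rw [ht, hε]
        ring
    _ ≤ 2 * Real.exp (-((n : ℝ) / 2) * (τ - 2 * ξ) ^ 2) := by
        linarith [Real.exp_pos (-((n : ℝ) / 2) * (τ - 2 * ξ) ^ 2)]
end

section
/- Let P₀, P₁ be probability measures with TV(P₀,P₁) > 2ε for some ε ∈ [0,1), and let A = {p₀ > p₁} where pⱼ = dPⱼ/d(P₀+P₁). For i.i.d. observations X₁,…,Xₙ from any distribution P of the form (1−ε)P₀ + εQ (Q arbitrary), the Scheffé test ϕ = 1{|Pₙ(A) − P₀(A)| > |Pₙ(A) − P₁(A)|} satisfies: sup over Q of [(1−ε)P₀+εQ](ϕ=1) plus sup over Q of [(1−ε)P₁+εQ](ϕ=0) is at most 4·exp(−(n/2)·(TV(P₀,P₁) − 2ε)²). -/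
open MeasureTheory

/-- Huber contamination mixture `(1-ε)P + εQ`. -/
noncomputable def mix {Ω : Type*} [MeasurableSpace Ω] (ε : ℝ) (P Q : Measure Ω) : Measure Ω :=
  (ENNReal.ofReal (1 - ε)) • P + (ENNReal.ofReal ε) • Q


open Real MeasureTheory ProbabilityTheory

set_option linter.unusedSectionVars false


lemma hoeffding_core {p : ℝ} (hp0 : 0 ≤ p) (hp1 : p ≤ 1) (l : ℝ) :
    p * exp l + (1 - p) ≤ exp (l * p + l ^ 2 / 8) := by
  set F : ℝ → ℝ := fun x => 1 - p + p * exp x with hFdef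
  have hF : ∀ x, 0 < F x := by
    intro x
    rcases lt_or_eq_of_le hp1 with h | h
    · have : 0 ≤ p * exp x := mul_nonneg hp0 (exp_pos x).le
      simp only [hFdef]; linarith
    · have : p = 1 := h
      simp only [hFdef, this]; simpa using exp_pos x
  have hF' : ∀ x, HasDerivAt F (p * exp x) x := by
    intro x
    exact ((Real.hasDerivAt_exp x).const_mul p).const_add (1 - p)
  set h : ℝ → ℝ := fun x => x ^ 2 / 8 + x * p - Real.log (F x) with hhdef
  set h1 : ℝ → ℝ := fun x => x / 4 + p - p * exp x / F x with hh1def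
  have hh' : ∀ x, HasDerivAt h (h1 x) x := by
    intro x
    have d1 : HasDerivAt (fun x : ℝ => x ^ 2 / 8) (x / 4) x := by
      have := (hasDerivAt_pow 2 x).div_const 8
      exact this.congr_deriv (by norm_num <;> ring)
    have d2 : HasDerivAt (fun x : ℝ => x * p) p x := by
      simpa using (hasDerivAt_id x).mul_const p
    have d3 : HasDerivAt (fun x => Real.log (F x)) (p * exp x / F x) x :=
      (hF' x).log (hF x).ne'
    exact (d1.add d2).sub d3
  have hh1' : ∀ x, HasDerivAt h1 (1 / 4 - p * exp x * (1 - p) / (F x) ^ 2) x := by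
    intro x
    have d1 : HasDerivAt (fun x : ℝ => x / 4 + p) (1 / 4) x := by
      simpa using ((hasDerivAt_id x).div_const 4).add_const p
    have d2 : HasDerivAt (fun x => p * exp x / F x)
        ((p * exp x * F x - p * exp x * (p * exp x)) / (F x) ^ 2) x :=
      ((Real.hasDerivAt_exp x).const_mul p).div (hF' x) (hF x).ne'
    have : HasDerivAt h1 (1 / 4 - (p * exp x * F x - p * exp x * (p * exp x)) / (F x) ^ 2) x :=
      d1.sub d2
    convert this using 2
    have : F x = 1 - p + p * exp x := rfl
    rw [this]; ring
  have hd2nonneg : ∀ x, 0 ≤ 1 / 4 - p * exp x * (1 - p) / (F x) ^ 2 := by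
    intro x
    have hFx : 0 < (F x) ^ 2 := pow_pos (hF x) 2
    rw [sub_nonneg, div_le_iff₀ hFx]
    have hFeq : F x = 1 - p + p * exp x := rfl
    nlinarith [sq_nonneg (1 - p - p * exp x), exp_pos x]
  have h1mono : Monotone h1 := by
    have hdiff : ∀ x, DifferentiableAt ℝ h1 x := fun x => (hh1' x).differentiableAt
    refine monotone_of_deriv_nonneg (fun x => hdiff x) ?_
    intro x
    rw [(hh1' x).deriv]
    exact hd2nonneg x
  have hh10 : h1 0 = 0 := by
    have : F 0 = 1 := by simp [hFdef]
    simp [hh1def, this]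
  have hh0 : h 0 = 0 := by
    have : F 0 = 1 := by simp [hFdef]
    simp [hhdef, this]
  have hdiffh : Differentiable ℝ h := fun x => (hh' x).differentiableAt
  have hderiv : ∀ x, deriv h x = h1 x := fun x => (hh' x).deriv
  have hnonneg : 0 ≤ h l := by
    rcases le_or_gt 0 l with hl | hl
    · have hmono : MonotoneOn h (Set.Ici 0) := by
        refine monotoneOn_of_deriv_nonneg (convex_Ici 0)
          hdiffh.continuous.continuousOn (hdiffh.differentiableOn) ?_
        intro x hx
        rw [hderiv]
        rw [interior_Ici] at hx
        rw [← hh10]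
        exact h1mono (le_of_lt hx)
      have := hmono (Set.self_mem_Ici) (Set.mem_Ici.mpr hl) hl
      rwa [hh0] at this
    · have hanti : AntitoneOn h (Set.Iic 0) := by
        refine antitoneOn_of_deriv_nonpos (convex_Iic 0)
          hdiffh.continuous.continuousOn (hdiffh.differentiableOn) ?_
        intro x hx
        rw [hderiv]
        rw [interior_Iic] at hx
        rw [← hh10]
        exact h1mono (le_of_lt hx)
      have := hanti (Set.mem_Iic.mpr hl.le) (Set.self_mem_Iic) hl.le
      rwa [hh0] at this
  have hlog : Real.log (F l) ≤ l * p + l ^ 2 / 8 := by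
    have := hnonneg; simp only [hhdef] at this; linarith
  have hle := (Real.log_le_iff_le_exp (hF l)).mp hlog
  have hFl : F l = 1 - p + p * exp l := rfl
  linarith



section Tail
variable {Ω : Type*} [MeasurableSpace Ω] (μ : Measure Ω) [IsProbabilityMeasure μ]
  {A : Set Ω} (n : ℕ)

lemma exp_indicator_eq (l : ℝ) (x : Ω) :
    exp (l * A.indicator (fun _ => (1:ℝ)) x) = 1 + A.indicator (fun _ => exp l - 1) x := by
  by_cases hx : x ∈ A <;> simp [Set.indicator_of_mem, Set.indicator_of_notMem, hx]

lemma integral_exp_indicator (hA : MeasurableSet A) (l : ℝ) :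
    ∫ x, exp (l * A.indicator (fun _ => (1:ℝ)) x) ∂μ
      = 1 - (μ A).toReal + (μ A).toReal * exp l := by
  simp_rw [exp_indicator_eq]
  rw [integral_add (integrable_const 1) ((integrable_const (exp l - 1)).indicator hA)]
  rw [integral_indicator_const _ hA]
  simp [smul_eq_mul, Measure.real]
  ring

lemma integral_exp_indicator_sum (hA : MeasurableSet A) (l : ℝ) :
    ∫ x : Fin n → Ω, exp (l * ∑ i, A.indicator (fun _ => (1:ℝ)) (x i))
        ∂(Measure.pi fun _ => μ)
      = (1 - (μ A).toReal + (μ A).toReal * exp l) ^ n := by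
  letI : MeasureSpace Ω := ⟨μ⟩
  haveI : SigmaFinite (volume : Measure Ω) := inferInstanceAs (SigmaFinite μ)
  have hvol : (Measure.pi fun _ : Fin n => μ) = (volume : Measure (Fin n → Ω)) :=
    (MeasureTheory.volume_pi).symm
  rw [hvol]
  have : ∀ x : Fin n → Ω, exp (l * ∑ i, A.indicator (fun _ => (1:ℝ)) (x i))
      = ∏ i, exp (l * A.indicator (fun _ => (1:ℝ)) (x i)) := by
    intro x
    rw [Finset.mul_sum, Real.exp_sum]
  simp_rw [this]
  rw [MeasureTheory.volume_pi, MeasureTheory.integral_fintype_prod_eq_pow (ι := Fin n)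
    (f := fun y : Ω => exp (l * A.indicator (fun _ => (1:ℝ)) y))]
  rw [show (∫ x, exp (l * A.indicator (fun _ => (1:ℝ)) x) ∂(volume : Measure Ω))
      = 1 - (μ A).toReal + (μ A).toReal * exp l from integral_exp_indicator μ hA l]
  simp

lemma measurable_indsum (hA : MeasurableSet A) : Measurable (fun x : Fin n → Ω =>
    ∑ i, A.indicator (fun _ => (1:ℝ)) (x i)) :=
  Finset.measurable_sum _ fun i _ =>
    (measurable_const.indicator hA).comp (measurable_pi_apply i)

lemma indsum_mem (x : Fin n → Ω) :
    0 ≤ (∑ i, A.indicator (fun _ => (1:ℝ)) (x i)) ∧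
      (∑ i, A.indicator (fun _ => (1:ℝ)) (x i)) ≤ n := by
  constructor
  · exact Finset.sum_nonneg fun i _ => Set.indicator_nonneg (fun _ _ => zero_le_one) _
  · have h1 : (∑ i, A.indicator (fun _ => (1:ℝ)) (x i)) ≤ ∑ _i : Fin n, (1:ℝ) := by
      refine Finset.sum_le_sum fun i _ => ?_
      by_cases hx : x i ∈ A <;> simp [Set.indicator_of_mem, Set.indicator_of_notMem, hx]
    simpa using h1

lemma integrable_exp_indsum (hA : MeasurableSet A) (l : ℝ) :
    Integrable (fun x : Fin n → Ω =>
      exp (l * ∑ i, A.indicator (fun _ => (1:ℝ)) (x i))) (Measure.pi fun _ => μ) := by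
  refine Integrable.mono' (integrable_const (exp (|l| * n)))
    (((measurable_indsum (A := A) n hA).const_mul l).exp.aestronglyMeasurable)
    (ae_of_all _ fun x => ?_)
  rw [Real.norm_eq_abs, Real.abs_exp]
  refine Real.exp_le_exp.mpr ?_
  obtain ⟨h0, hn⟩ := indsum_mem (A := A) n x
  calc l * ∑ i, A.indicator (fun _ => (1:ℝ)) (x i)
      ≤ |l| * ∑ i, A.indicator (fun _ => (1:ℝ)) (x i) :=
        mul_le_mul_of_nonneg_right (le_abs_self l) h0
    _ ≤ |l| * n := mul_le_mul_of_nonneg_left hn (abs_nonneg l)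

lemma mgf_indsum_le (hA : MeasurableSet A) (l : ℝ) :
    mgf (fun x : Fin n → Ω => ∑ i, A.indicator (fun _ => (1:ℝ)) (x i))
        (Measure.pi fun _ => μ) l
      ≤ exp ((n : ℝ) * (l * (μ A).toReal + l ^ 2 / 8)) := by
  have hp0 : 0 ≤ (μ A).toReal := ENNReal.toReal_nonneg
  have hp1 : (μ A).toReal ≤ 1 := by
    simpa using ENNReal.toReal_mono ENNReal.one_ne_top prob_le_one
  have hmgf : mgf (fun x : Fin n → Ω => ∑ i, A.indicator (fun _ => (1:ℝ)) (x i))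
      (Measure.pi fun _ => μ) l
      = ∫ x : Fin n → Ω, exp (l * ∑ i, A.indicator (fun _ => (1:ℝ)) (x i))
          ∂(Measure.pi fun _ => μ) := rfl
  rw [hmgf, integral_exp_indicator_sum μ n hA l]
  rw [Real.exp_nat_mul]
  refine pow_le_pow_left₀ (by nlinarith [exp_pos l]) ?_ n
  have := hoeffding_core hp0 hp1 l
  linarith
end Tail

section Tail2
variable {Ω : Type*} [MeasurableSpace Ω] (μ : Measure Ω) [IsProbabilityMeasure μ]
  {A : Set Ω} (n : ℕ)

lemma tail_bound_le (hA : MeasurableSet A) {t : ℝ} (ht : 0 ≤ t) :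
    ((Measure.pi fun _ : Fin n => μ)
      {x | (∑ i, A.indicator (fun _ => (1:ℝ)) (x i)) ≤ n * ((μ A).toReal - t)}).toReal
      ≤ exp (-2 * n * t ^ 2) := by
  set p := (μ A).toReal with hp
  have key := measure_le_le_exp_mul_mgf (μ := Measure.pi fun _ : Fin n => μ)
    (X := fun x : Fin n → Ω => ∑ i, A.indicator (fun _ => (1:ℝ)) (x i))
    ((n : ℝ) * (p - t)) (t := -(4 * t)) (by linarith)
    (integrable_exp_indsum μ n hA _)
  refine key.trans ?_
  calc exp (-(-(4 * t)) * ((n : ℝ) * (p - t))) *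
        mgf (fun x : Fin n → Ω => ∑ i, A.indicator (fun _ => (1:ℝ)) (x i))
          (Measure.pi fun _ => μ) (-(4 * t))
      ≤ exp (-(-(4 * t)) * ((n : ℝ) * (p - t))) *
          exp ((n : ℝ) * ((-(4 * t)) * p + (-(4 * t)) ^ 2 / 8)) := by
        exact mul_le_mul_of_nonneg_left (mgf_indsum_le μ n hA _) (exp_pos _).le
    _ = exp (-2 * n * t ^ 2) := by
        rw [← Real.exp_add]
        congr 1
        ring

lemma tail_bound_ge (hA : MeasurableSet A) {t : ℝ} (ht : 0 ≤ t) :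
    ((Measure.pi fun _ : Fin n => μ)
      {x | n * ((μ A).toReal + t) ≤ (∑ i, A.indicator (fun _ => (1:ℝ)) (x i))}).toReal
      ≤ exp (-2 * n * t ^ 2) := by
  set p := (μ A).toReal with hp
  have key := measure_ge_le_exp_mul_mgf (μ := Measure.pi fun _ : Fin n => μ)
    (X := fun x : Fin n → Ω => ∑ i, A.indicator (fun _ => (1:ℝ)) (x i))
    ((n : ℝ) * (p + t)) (t := 4 * t) (by linarith)
    (integrable_exp_indsum μ n hA _)
  refine key.trans ?_
  calc exp (-(4 * t) * ((n : ℝ) * (p + t))) *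
        mgf (fun x : Fin n → Ω => ∑ i, A.indicator (fun _ => (1:ℝ)) (x i))
          (Measure.pi fun _ => μ) (4 * t)
      ≤ exp (-(4 * t) * ((n : ℝ) * (p + t))) *
          exp ((n : ℝ) * ((4 * t) * p + (4 * t) ^ 2 / 8)) := by
        exact mul_le_mul_of_nonneg_left (mgf_indsum_le μ n hA _) (exp_pos _).le
    _ = exp (-2 * n * t ^ 2) := by
        rw [← Real.exp_add]
        congr 1
        ring
end Tail2



lemma tv_le {Ω : Type*} [MeasurableSpace Ω] (P₀ P₁ : Measure Ω)
    [IsProbabilityMeasure P₀] [IsProbabilityMeasure P₁]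
    {A : Set Ω} (hA : A = {x | (P₁.rnDeriv (P₀ + P₁)) x < (P₀.rnDeriv (P₀ + P₁)) x}) :
    tvDist P₀ P₁ ≤ (P₀ A).toReal - (P₁ A).toReal := by
  set ν : Measure Ω := P₀ + P₁ with hν
  have hac₀ : P₀ ≪ ν := Measure.absolutelyContinuous_of_le (Measure.le_add_right le_rfl)
  have hac₁ : P₁ ≪ ν := Measure.absolutelyContinuous_of_le (Measure.le_add_left le_rfl)
  set f₀ : Ω → ℝ := fun x => (P₀.rnDeriv ν x).toReal with hf₀
  set f₁ : Ω → ℝ := fun x => (P₁.rnDeriv ν x).toReal with hf₁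
  have hint₀ : Integrable f₀ ν := Measure.integrable_toReal_rnDeriv
  have hint₁ : Integrable f₁ ν := Measure.integrable_toReal_rnDeriv
  have hset₀ : ∀ s : Set Ω, ∫ x in s, f₀ x ∂ν = (P₀ s).toReal :=
    fun s => Measure.setIntegral_toReal_rnDeriv hac₀ s
  have hset₁ : ∀ s : Set Ω, ∫ x in s, f₁ x ∂ν = (P₁ s).toReal :=
    fun s => Measure.setIntegral_toReal_rnDeriv hac₁ s
  have hAmeas : MeasurableSet A := by
    rw [hA]
    exact measurableSet_lt (Measure.measurable_rnDeriv _ _) (Measure.measurable_rnDeriv _ _)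
  -- a.e. comparison of densities on A and Aᶜ
  have hae : ∀ᵐ x ∂ν, (x ∈ A → f₁ x ≤ f₀ x) ∧ (x ∉ A → f₀ x ≤ f₁ x) := by
    filter_upwards [Measure.rnDeriv_lt_top P₀ ν, Measure.rnDeriv_lt_top P₁ ν] with x h₀ h₁
    constructor
    · intro hx
      rw [hA] at hx
      exact ENNReal.toReal_mono h₀.ne (le_of_lt hx)
    · intro hx
      rw [hA] at hx
      simp only [Set.mem_setOf_eq, not_lt] at hx
      exact ENNReal.toReal_mono h₁.ne hx
  have key : ∀ B : Set Ω, MeasurableSet B →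
      |(P₀ B).toReal - (P₁ B).toReal| ≤ (P₀ A).toReal - (P₁ A).toReal := by
    intro B hB
    set g : Ω → ℝ := fun x => f₀ x - f₁ x with hg
    have hintg : Integrable g ν := hint₀.sub hint₁
    have hsetg : ∀ s : Set Ω, ∫ x in s, g x ∂ν = (P₀ s).toReal - (P₁ s).toReal := by
      intro s
      rw [hg]
      rw [integral_sub hint₀.integrableOn hint₁.integrableOn, hset₀ s, hset₁ s]
    rw [abs_sub_le_iff]
    constructor
    · -- P₀ B - P₁ B ≤ P₀ A - P₁ A
      rw [← hsetg B, ← hsetg A]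
      have hsplit : ∫ x in B, g x ∂ν = (∫ x in B ∩ A, g x ∂ν) + ∫ x in B \ A, g x ∂ν :=
        (integral_inter_add_diff hAmeas hintg.integrableOn).symm
      have h1 : ∫ x in B \ A, g x ∂ν ≤ 0 := by
        refine integral_nonpos_of_ae ?_
        rw [Filter.EventuallyLE, ae_restrict_iff' (hB.diff hAmeas)]
        filter_upwards [hae] with x hx hxB
        have := hx.2 hxB.2
        simp only [hg, Pi.zero_apply]
        linarith
      have h2 : ∫ x in B ∩ A, g x ∂ν ≤ ∫ x in A, g x ∂ν := by
        refine setIntegral_mono_set hintg.integrableOn ?_ (HasSubset.Subset.eventuallyLE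
          Set.inter_subset_right)
        rw [Filter.EventuallyLE, ae_restrict_iff' hAmeas]
        filter_upwards [hae] with x hx hxA
        have := hx.1 hxA
        simp only [hg, Pi.zero_apply]
        linarith
      linarith
    · -- P₁ B - P₀ B ≤ P₀ A - P₁ A
      have hsetg' : ∀ s : Set Ω, ∫ x in s, -g x ∂ν = (P₁ s).toReal - (P₀ s).toReal := by
        intro s
        rw [integral_neg, hsetg s]
        ring
      have hcompl : ∫ x in Aᶜ, -g x ∂ν = (P₀ A).toReal - (P₁ A).toReal := by
        rw [hsetg' Aᶜ]
        have e₀ : (P₀ Aᶜ).toReal = 1 - (P₀ A).toReal := by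
          rw [measure_compl hAmeas (measure_ne_top _ _), measure_univ,
            ENNReal.toReal_sub_of_le prob_le_one ENNReal.one_ne_top, ENNReal.toReal_one]
        have e₁ : (P₁ Aᶜ).toReal = 1 - (P₁ A).toReal := by
          rw [measure_compl hAmeas (measure_ne_top _ _), measure_univ,
            ENNReal.toReal_sub_of_le prob_le_one ENNReal.one_ne_top, ENNReal.toReal_one]
        rw [e₀, e₁]
        ring
      rw [← hcompl]
      have hstep : (P₁ B).toReal - (P₀ B).toReal = ∫ x in B, -g x ∂ν := (hsetg' B).symm
      rw [hstep]
      have hsplit : ∫ x in B, -g x ∂ν = (∫ x in B ∩ Aᶜ, -g x ∂ν) + ∫ x in B \ Aᶜ, -g x ∂ν :=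
        (integral_inter_add_diff hAmeas.compl (hintg.neg.integrableOn)).symm
      have h1 : ∫ x in B \ Aᶜ, -g x ∂ν ≤ 0 := by
        refine integral_nonpos_of_ae ?_
        rw [Filter.EventuallyLE, ae_restrict_iff' (hB.diff hAmeas.compl)]
        filter_upwards [hae] with x hx hxB
        have hxA : x ∈ A := by simpa using hxB.2
        have := hx.1 hxA
        simp only [hg, Pi.zero_apply]
        linarith
      have h2 : ∫ x in B ∩ Aᶜ, -g x ∂ν ≤ ∫ x in Aᶜ, -g x ∂ν := by
        refine setIntegral_mono_set hintg.neg.integrableOn ?_ (HasSubset.Subset.eventuallyLE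
          Set.inter_subset_right)
        rw [Filter.EventuallyLE, ae_restrict_iff' hAmeas.compl]
        filter_upwards [hae] with x hx hxA
        have := hx.2 hxA
        simp only [hg, Pi.zero_apply]
        linarith
      linarith
  rw [tvDist]
  refine ciSup_le ?_
  rintro ⟨B, hB⟩
  exact key B hB


section MixAux
variable {Ω : Type*} [MeasurableSpace Ω]

lemma mix_isProb {ε : ℝ} (hε0 : 0 ≤ ε) (hε1 : ε ≤ 1)
    (P Q : Measure Ω) [IsProbabilityMeasure P] [IsProbabilityMeasure Q] :
    IsProbabilityMeasure (mix ε P Q) := by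
  constructor
  have h1 : (mix ε P Q) Set.univ = ENNReal.ofReal (1 - ε) * 1 + ENNReal.ofReal ε * 1 := by
    simp [mix, Measure.add_apply, Measure.smul_apply, smul_eq_mul]
  rw [h1, mul_one, mul_one, ← ENNReal.ofReal_add (by linarith) hε0]
  norm_num

lemma mix_apply_toReal {ε : ℝ} (hε0 : 0 ≤ ε) (hε1 : ε ≤ 1)
    (P Q : Measure Ω) [IsFiniteMeasure P] [IsFiniteMeasure Q] (A : Set Ω) :
    ((mix ε P Q) A).toReal = (1 - ε) * (P A).toReal + ε * (Q A).toReal := by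
  have h1 : (mix ε P Q) A = ENNReal.ofReal (1 - ε) * P A + ENNReal.ofReal ε * Q A := by
    simp [mix, Measure.add_apply, Measure.smul_apply, smul_eq_mul]
  rw [h1, ENNReal.toReal_add
      (ENNReal.mul_ne_top ENNReal.ofReal_ne_top (measure_ne_top _ _))
      (ENNReal.mul_ne_top ENNReal.ofReal_ne_top (measure_ne_top _ _)),
    ENNReal.toReal_mul, ENNReal.toReal_mul, ENNReal.toReal_ofReal hε0,
    ENNReal.toReal_ofReal (by linarith)]

lemma prob_toReal_le_one (P : Measure Ω) [IsProbabilityMeasure P] (A : Set Ω) :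
    (P A).toReal ≤ 1 := by
  simpa using ENNReal.toReal_mono ENNReal.one_ne_top prob_le_one
end MixAux

/-- robust Scheffé testing error bound under Huber's ε-contamination model,
with `A = {p₀ > p₁}` for densities with respect to `P₀ + P₁`. The sum of the two worst-case
error probabilities (over arbitrary contaminations `Q₀`, `Q₁`) is at most
`4 exp(-(n/2)(TV(P₀,P₁)-2ε)²)`. -/
theorem stmt1 {Ω : Type*} [MeasurableSpace Ω]
    (P₀ P₁ : Measure Ω) [IsProbabilityMeasure P₀] [IsProbabilityMeasure P₁]
    (ε : ℝ) (hε0 : 0 ≤ ε) (hε1 : ε < 1)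
    (hgap : tvDist P₀ P₁ > 2 * ε)
    (A : Set Ω)
    (hA : A = {x | (P₁.rnDeriv (P₀ + P₁)) x < (P₀.rnDeriv (P₀ + P₁)) x})
    (n : ℕ) (hn : 0 < n)
    (Q₀ Q₁ : Measure Ω) [IsProbabilityMeasure Q₀] [IsProbabilityMeasure Q₁] :
    ((Measure.pi (fun _ : Fin n => mix ε P₀ Q₀))
      {x | |(∑ i, A.indicator (fun _ => (1:ℝ)) (x i)) / n - (P₀ A).toReal|
            > |(∑ i, A.indicator (fun _ => (1:ℝ)) (x i)) / n - (P₁ A).toReal|}).toReal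
    + ((Measure.pi (fun _ : Fin n => mix ε P₁ Q₁))
      {x | ¬ (|(∑ i, A.indicator (fun _ => (1:ℝ)) (x i)) / n - (P₀ A).toReal|
            > |(∑ i, A.indicator (fun _ => (1:ℝ)) (x i)) / n - (P₁ A).toReal|)}).toReal
      ≤ 4 * Real.exp (-((n : ℝ) / 2) * (tvDist P₀ P₁ - 2 * ε) ^ 2) := by
  haveI h₀ : IsProbabilityMeasure (mix ε P₀ Q₀) := mix_isProb hε0 hε1.le P₀ Q₀
  haveI h₁ : IsProbabilityMeasure (mix ε P₁ Q₁) := mix_isProb hε0 hε1.le P₁ Q₁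
  have hAmeas : MeasurableSet A := by
    rw [hA]
    exact measurableSet_lt (Measure.measurable_rnDeriv _ _) (Measure.measurable_rnDeriv _ _)
  set a := (P₀ A).toReal with ha
  set b := (P₁ A).toReal with hb
  set τ := tvDist P₀ P₁ with hτ
  have hab : τ ≤ a - b := tv_le P₀ P₁ hA
  set t := (τ - 2 * ε) / 2 with htdef
  have ht : 0 < t := by rw [htdef]; linarith
  have ha1 : a ≤ 1 := prob_toReal_le_one P₀ A
  have hb1 : b ≤ 1 := prob_toReal_le_one P₁ A
  have ha0 : 0 ≤ a := ENNReal.toReal_nonneg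
  have hb0 : 0 ≤ b := ENNReal.toReal_nonneg
  have hq₀ : 0 ≤ (Q₀ A).toReal := ENNReal.toReal_nonneg
  have hq₁ : (Q₁ A).toReal ≤ 1 := prob_toReal_le_one Q₁ A
  set m₀ := ((mix ε P₀ Q₀) A).toReal with hm₀def
  set m₁ := ((mix ε P₁ Q₁) A).toReal with hm₁def
  have hm₀ : a - ε ≤ m₀ := by
    rw [hm₀def, mix_apply_toReal hε0 hε1.le]
    nlinarith
  have hm₁ : m₁ ≤ b + ε := by
    rw [hm₁def, mix_apply_toReal hε0 hε1.le]
    nlinarith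
  have hn' : (0:ℝ) < n := by exact_mod_cast hn
  -- inclusion for the first error event
  have hsub₀ : {x : Fin n → Ω | |(∑ i, A.indicator (fun _ => (1:ℝ)) (x i)) / n - a|
        > |(∑ i, A.indicator (fun _ => (1:ℝ)) (x i)) / n - b|}
      ⊆ {x : Fin n → Ω | (∑ i, A.indicator (fun _ => (1:ℝ)) (x i)) ≤ n * (m₀ - t)} := by
    intro x hx
    simp only [Set.mem_setOf_eq] at hx ⊢
    set S := ∑ i, A.indicator (fun _ => (1:ℝ)) (x i) with hS
    set y := S / (n:ℝ) with hy
    have hba : b < a := by linarith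
    have hsq : (y - b) ^ 2 < (y - a) ^ 2 := by
      have h1 := pow_lt_pow_left₀ hx (abs_nonneg _) two_ne_zero
      rwa [sq_abs, sq_abs] at h1
    have h3 : (2 * y) * (a - b) < (a + b) * (a - b) := by nlinarith [hsq]
    have h4 : 2 * y < a + b := lt_of_mul_lt_mul_right h3 (by linarith)
    have h5 : y < m₀ - t := by rw [htdef] at *; linarith
    have h6 : S < (m₀ - t) * n := (div_lt_iff₀ hn').mp h5
    linarith
  -- inclusion for the second error event
  have hsub₁ : {x : Fin n → Ω | ¬ (|(∑ i, A.indicator (fun _ => (1:ℝ)) (x i)) / n - a|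
        > |(∑ i, A.indicator (fun _ => (1:ℝ)) (x i)) / n - b|)}
      ⊆ {x : Fin n → Ω | (n:ℝ) * (m₁ + t) ≤ (∑ i, A.indicator (fun _ => (1:ℝ)) (x i))} := by
    intro x hx
    simp only [Set.mem_setOf_eq, not_lt] at hx ⊢
    set S := ∑ i, A.indicator (fun _ => (1:ℝ)) (x i) with hS
    set y := S / (n:ℝ) with hy
    have hba : b < a := by linarith
    have hsq : (y - a) ^ 2 ≤ (y - b) ^ 2 := by
      have h1 := pow_le_pow_left₀ (abs_nonneg _) hx 2
      rwa [sq_abs, sq_abs] at h1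
    have h3 : (a + b) * (a - b) ≤ (2 * y) * (a - b) := by nlinarith [hsq]
    have h4 : a + b ≤ 2 * y := le_of_mul_le_mul_right h3 (by linarith)
    have h5 : m₁ + t ≤ y := by rw [htdef] at *; linarith
    have h6 : (m₁ + t) * n ≤ S := (le_div_iff₀ hn').mp h5
    linarith
  have e₀ : ((Measure.pi (fun _ : Fin n => mix ε P₀ Q₀))
      {x | |(∑ i, A.indicator (fun _ => (1:ℝ)) (x i)) / n - a|
            > |(∑ i, A.indicator (fun _ => (1:ℝ)) (x i)) / n - b|}).toReal
      ≤ Real.exp (-2 * n * t ^ 2) := by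
    refine le_trans (ENNReal.toReal_mono (measure_ne_top _ _) (measure_mono hsub₀)) ?_
    exact tail_bound_le (mix ε P₀ Q₀) n hAmeas ht.le
  have e₁ : ((Measure.pi (fun _ : Fin n => mix ε P₁ Q₁))
      {x | ¬ (|(∑ i, A.indicator (fun _ => (1:ℝ)) (x i)) / n - a|
            > |(∑ i, A.indicator (fun _ => (1:ℝ)) (x i)) / n - b|)}).toReal
      ≤ Real.exp (-2 * n * t ^ 2) := by
    refine le_trans (ENNReal.toReal_mono (measure_ne_top _ _) (measure_mono hsub₁)) ?_
    exact tail_bound_ge (mix ε P₁ Q₁) n hAmeas ht.le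
  have hexp : (-2 : ℝ) * n * t ^ 2 = -((n : ℝ) / 2) * (τ - 2 * ε) ^ 2 := by
    rw [htdef]; ring
  calc ((Measure.pi (fun _ : Fin n => mix ε P₀ Q₀))
      {x | |(∑ i, A.indicator (fun _ => (1:ℝ)) (x i)) / n - a|
            > |(∑ i, A.indicator (fun _ => (1:ℝ)) (x i)) / n - b|}).toReal
    + ((Measure.pi (fun _ : Fin n => mix ε P₁ Q₁))
      {x | ¬ (|(∑ i, A.indicator (fun _ => (1:ℝ)) (x i)) / n - a|
            > |(∑ i, A.indicator (fun _ => (1:ℝ)) (x i)) / n - b|)}).toReal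
      ≤ Real.exp (-2 * n * t ^ 2) + Real.exp (-2 * n * t ^ 2) := add_le_add e₀ e₁
    _ ≤ 4 * Real.exp (-((n : ℝ) / 2) * (τ - 2 * ε) ^ 2) := by
        rw [hexp]
        have := Real.exp_pos (-((n : ℝ) / 2) * (τ - 2 * ε) ^ 2)
        linarith
end

section
/- Let X₁,…,Xₙ be i.i.d. from (1−ε)N(μ,1) + εQ with ε < 1/4 and Q arbitrary, and let μ̂ = Median(X₁,…,Xₙ). Then there exists a universal constant C such that for any δ ∈ (0,1) with √(log(1/δ)/n) sufficiently small, |μ̂ − μ| ≤ C·(√(log(1/δ)/n) ∨ ε) with probability at least 1 − 2δ, uniformly over μ ∈ ℝ and Q. -/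
open MeasureTheory ProbabilityTheory

/-- Factorization of the Lebesgue integral of a product of coordinate functions over a
finite product of copies of a probability measure. -/
lemma lintegral_pi_prod_aux : ∀ (n : ℕ) (ν : Measure ℝ) (_ : IsProbabilityMeasure ν)
    (g : ℝ → ENNReal) (_ : Measurable g),
    ∫⁻ x, ∏ i, g (x i) ∂(Measure.pi fun _ : Fin n => ν) = (∫⁻ y, g y ∂ν) ^ n := by
  intro n
  induction n with
  | zero =>
      intro ν hν g hg
      simp [lintegral_const]
  | succ n ih =>
      intro ν hν g hg
      have mp := measurePreserving_piFinSuccAbove (fun _ : Fin (n+1) => ν) 0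
      set F : ℝ × (Fin n → ℝ) → ENNReal := fun q => g q.1 * ∏ i, g (q.2 i) with hF
      have hprodmeas : Measurable fun z : Fin n → ℝ => ∏ i, g (z i) :=
        Finset.measurable_prod Finset.univ fun i _ => hg.comp (measurable_pi_apply i)
      have hFm : Measurable F :=
        (hg.comp measurable_fst).mul (hprodmeas.comp measurable_snd)
      have hcomp : ∀ x : Fin (n+1) → ℝ,
          F (MeasurableEquiv.piFinSuccAbove (fun _ => ℝ) 0 x) = ∏ i, g (x i) := by
        intro x
        have h0 : (MeasurableEquiv.piFinSuccAbove (fun _ => ℝ) 0 x) =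
            (x 0, fun j : Fin n => x ((0 : Fin (n+1)).succAbove j)) := rfl
        rw [h0, hF]
        simp only [Fin.succAbove_zero]
        rw [Fin.prod_univ_succ]
      calc ∫⁻ x, ∏ i, g (x i) ∂(Measure.pi fun _ : Fin (n+1) => ν)
          = ∫⁻ x, F (MeasurableEquiv.piFinSuccAbove (fun _ => ℝ) 0 x)
              ∂(Measure.pi fun _ : Fin (n+1) => ν) := by
            refine lintegral_congr fun x => (hcomp x).symm
        _ = ∫⁻ q, F q ∂(ν.prod (Measure.pi fun _ : Fin n => ν)) := mp.lintegral_comp hFm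
        _ = ∫⁻ y, ∫⁻ z, g y * ∏ i, g (z i) ∂(Measure.pi fun _ : Fin n => ν) ∂ν := by
            rw [lintegral_prod F hFm.aemeasurable]
        _ = ∫⁻ y, g y * (∫⁻ y, g y ∂ν) ^ n ∂ν := by
            refine lintegral_congr fun y => ?_
            rw [lintegral_const_mul (g y) hprodmeas, ih ν hν g hg]
        _ = (∫⁻ y, g y ∂ν) ^ (n+1) := by
            rw [lintegral_mul_const _ hg, pow_succ, mul_comm]

open scoped Classical in
/-- Chernoff bound: probability that at least half of `n` iid samples land in a set of
probability at most `1/2 - γ`. -/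
lemma tail_bound {n : ℕ} (ν : Measure ℝ) [IsProbabilityMeasure ν] {A : Set ℝ}
    (hA : MeasurableSet A) {γ : ℝ} (hγ0 : 0 ≤ γ)
    (hp : (ν A).toReal ≤ 1/2 - γ) (E : Set (Fin n → ℝ))
    (hE : ∀ x ∈ E, (n : ℝ)/2 ≤ ((Finset.univ.filter fun i => x i ∈ A).card : ℝ)) :
    (Measure.pi fun _ : Fin n => ν) E
      ≤ ENNReal.ofReal (Real.exp (-((n : ℝ) * γ^2 / 2))) := by
  set p := (ν A).toReal with hpdef
  have hp0 : 0 ≤ p := ENNReal.toReal_nonneg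
  have hp1 : p ≤ 1 := by
    have := prob_le_one (μ := ν) (s := A)
    simpa [hpdef] using ENNReal.toReal_mono ENNReal.one_ne_top this
  have hγhalf : γ ≤ 1/2 := by linarith
  set g : ℝ → ENNReal := fun y => if y ∈ A then ENNReal.ofReal (Real.exp γ) else 1 with hgdef
  have hg : Measurable g := Measurable.ite hA measurable_const measurable_const
  have hνA : ν A = ENNReal.ofReal p := (ENNReal.ofReal_toReal (measure_ne_top ν A)).symm
  have hB : ∫⁻ y, g y ∂ν = ENNReal.ofReal (1 + p * (Real.exp γ - 1)) := by
    rw [← lintegral_add_compl g hA]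
    have h1 : ∫⁻ y in A, g y ∂ν = ENNReal.ofReal (Real.exp γ) * ν A := by
      rw [setLIntegral_congr_fun hA (fun y hy => if_pos hy), setLIntegral_const]
    have h2 : ∫⁻ y in Aᶜ, g y ∂ν = ν Aᶜ := by
      rw [setLIntegral_congr_fun hA.compl (fun y hy => if_neg hy),
        setLIntegral_const, one_mul]
    rw [h1, h2, prob_compl_eq_one_sub hA, hνA]
    rw [show (1 : ENNReal) = ENNReal.ofReal 1 by simp, ← ENNReal.ofReal_sub _ hp0,
      ← ENNReal.ofReal_mul (Real.exp_nonneg γ), ← ENNReal.ofReal_add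
        (by positivity) (by linarith)]
    congr 1
    ring
  set G : (Fin n → ℝ) → ENNReal := fun x => ∏ i, g (x i) with hGdef
  have hG : Measurable G :=
    Finset.measurable_prod Finset.univ fun i _ => hg.comp (measurable_pi_apply i)
  set c : ENNReal := ENNReal.ofReal (Real.exp (γ * n / 2)) with hcdef
  have hsub : E ⊆ {x | c ≤ G x} := by
    intro x hx
    have hx := hE x hx
    simp only [Set.mem_setOf_eq]
    set k := (Finset.univ.filter fun i => x i ∈ A).card with hk
    have hGx : ENNReal.ofReal (Real.exp (γ * k)) ≤ G x := by
      have hsubset : (Finset.univ.filter fun i => x i ∈ A) ⊆ Finset.univ :=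
        Finset.filter_subset _ _
      have h1 : ∏ i ∈ (Finset.univ.filter fun i => x i ∈ A), g (x i) ≤ G x := by
        refine Finset.prod_le_prod_of_subset_of_one_le' hsubset fun i _ hi => ?_
        simp only [Finset.mem_filter, Finset.mem_univ, true_and] at hi
        simp [hgdef, hi]
      have h2 : ∏ i ∈ (Finset.univ.filter fun i => x i ∈ A), g (x i)
          = ENNReal.ofReal (Real.exp γ) ^ k := by
        rw [Finset.prod_congr rfl (fun i hi => ?_), Finset.prod_const, hk]
        simp only [Finset.mem_filter, Finset.mem_univ, true_and] at hi
        simp [hgdef, hi]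
      rw [← ENNReal.ofReal_pow (Real.exp_nonneg γ), ← Real.exp_nat_mul, mul_comm (k:ℝ) γ] at h2
      calc ENNReal.ofReal (Real.exp (γ * k)) = ∏ i ∈ (Finset.univ.filter fun i => x i ∈ A),
            g (x i) := h2.symm
        _ ≤ G x := h1
    refine le_trans ?_ hGx
    rw [hcdef]
    exact ENNReal.ofReal_le_ofReal (Real.exp_le_exp.2 (by nlinarith))
  have hmarkov := mul_meas_ge_le_lintegral (μ := Measure.pi fun _ : Fin n => ν) hG c
  have hprod : ∫⁻ x, G x ∂(Measure.pi fun _ : Fin n => ν) = (∫⁻ y, g y ∂ν) ^ n :=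
    lintegral_pi_prod_aux n ν inferInstance g hg
  -- real-number inequality
  have hexp_bound : Real.exp γ ≤ 1 + γ + γ^2 := by
    have h := Real.exp_bound (x := γ) (by rw [abs_of_nonneg hγ0]; linarith) (n := 2) (by norm_num)
    rw [abs_of_nonneg hγ0] at h
    have hsum : ∑ m ∈ Finset.range 2, γ ^ m / (m.factorial : ℝ) = 1 + γ := by
      simp [Finset.sum_range_succ]
    rw [hsum] at h
    have h2 := (abs_le.1 h).2
    norm_num at h2
    nlinarith [sq_nonneg γ]
  have hexpγ1 : (1:ℝ) ≤ Real.exp γ := by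
    rw [show (1:ℝ) = Real.exp 0 by simp]
    exact Real.exp_le_exp.2 hγ0
  have hbase0 : 0 ≤ 1 + p * (Real.exp γ - 1) := by nlinarith
  have hreal : (1 + p * (Real.exp γ - 1)) ^ n / Real.exp (γ * n / 2)
      ≤ Real.exp (-((n : ℝ) * γ^2 / 2)) := by
    have h1 : (1 + p * (Real.exp γ - 1)) ^ n ≤ Real.exp ((n : ℝ) * (p * (Real.exp γ - 1))) := by
      rw [Real.exp_nat_mul]
      exact pow_le_pow_left₀ hbase0
        (by linarith [Real.add_one_le_exp (p * (Real.exp γ - 1))]) n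
    have h2 : (n : ℝ) * (p * (Real.exp γ - 1)) ≤ γ * n / 2 - (n : ℝ) * γ^2 / 2 := by
      have hn0 : (0:ℝ) ≤ n := Nat.cast_nonneg n
      have key : p * (Real.exp γ - 1) ≤ γ / 2 - γ^2 / 2 := by
        have h3 : p * (Real.exp γ - 1) ≤ p * (γ + γ^2) := by nlinarith
        nlinarith
      nlinarith
    rw [div_le_iff₀ (Real.exp_pos _), ← Real.exp_add]
    exact le_trans h1 (Real.exp_le_exp.2 (by linarith))
  have hc0 : c ≠ 0 := by simp [hcdef, Real.exp_pos]
  have hctop : c ≠ ⊤ := ENNReal.ofReal_ne_top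
  have hle : (Measure.pi fun _ : Fin n => ν) E
      ≤ (∫⁻ y, g y ∂ν) ^ n / c := by
    rw [ENNReal.le_div_iff_mul_le (Or.inl hc0) (Or.inl hctop)]
    calc (Measure.pi fun _ : Fin n => ν) E * c
        ≤ (Measure.pi fun _ : Fin n => ν) {x | c ≤ G x} * c :=
          mul_le_mul_left (measure_mono hsub) c
      _ = c * (Measure.pi fun _ : Fin n => ν) {x | c ≤ G x} := mul_comm _ _
      _ ≤ ∫⁻ x, G x ∂(Measure.pi fun _ : Fin n => ν) := hmarkov
      _ = (∫⁻ y, g y ∂ν) ^ n := hprod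
  refine le_trans hle ?_
  rw [hB, ← ENNReal.ofReal_pow hbase0, hcdef,
    ← ENNReal.ofReal_div_of_pos (Real.exp_pos _)]
  exact ENNReal.ofReal_le_ofReal hreal

/-- Gaussian two-sided tail bound with linear gain near the center. -/
lemma gauss_tails (μ t : ℝ) (ht : 0 ≤ t) :
    (gaussianReal μ 1 (Set.Ioi (μ + t))).toReal ≤ 1/2 - min t 1 / 5 ∧
    (gaussianReal μ 1 (Set.Iio (μ - t))).toReal ≤ 1/2 - min t 1 / 5 := by
  have hv : (1 : NNReal) ≠ 0 := one_ne_zero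
  set m := gaussianReal μ 1 with hm
  have hprob : IsProbabilityMeasure m := by rw [hm]; infer_instance
  set t' := min t 1 with ht'
  have ht'0 : 0 ≤ t' := le_min ht zero_le_one
  have ht'1 : t' ≤ 1 := min_le_right _ _
  have ht't : t' ≤ t := min_le_left _ _
  -- symmetry: m is invariant under x ↦ 2μ - x
  have hsym : m.map (fun x => 2*μ - x) = m := by
    have h1 : (fun x : ℝ => 2*μ - x) = (fun x => x + 2*μ) ∘ (fun x => (-1) * x) := by
      funext x; simp; ring
    rw [h1, ← Measure.map_map (measurable_id'.add_const _) (measurable_id'.const_mul _)]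
    have h2 : m.map (fun x => (-1 : ℝ) * x) = gaussianReal (-μ) 1 := by
      rw [hm, gaussianReal_map_const_mul (-1)]
      norm_num
    rw [h2, gaussianReal_map_add_const, hm]
    congr 1
    ring
  have htail_eq : ∀ u : ℝ, m (Set.Iio (μ - u)) = m (Set.Ioi (μ + u)) := by
    intro u
    conv_lhs => rw [← hsym]
    rw [Measure.map_apply (by fun_prop) measurableSet_Iio]
    congr 1
    ext x
    simp only [Set.mem_preimage, Set.mem_Iio, Set.mem_Ioi]
    constructor <;> intro h <;> linarith
  -- numeric lower bound on the density near the center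
  have hdens : (1:ℝ)/5 ≤ (Real.sqrt (2 * Real.pi))⁻¹ * Real.exp (-(1:ℝ)/2) := by
    have hπ : Real.pi < 3.15 := Real.pi_lt_d2
    have hπ0 : 0 < Real.pi := Real.pi_pos
    have hS : Real.sqrt (2 * Real.pi) ≤ 2.6 := by
      rw [Real.sqrt_le_left (by norm_num)]
      nlinarith
    have hS0 : 0 < Real.sqrt (2 * Real.pi) := Real.sqrt_pos.2 (by linarith)
    have hE2 : Real.exp (1/2) * Real.exp (1/2) = Real.exp 1 := by
      rw [← Real.exp_add]; norm_num
    have he1 : Real.exp 1 < 2.7182818286 := Real.exp_one_lt_d9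
    have hEpos : 0 < Real.exp (1/2) := Real.exp_pos _
    have hEle : Real.exp (1/2) ≤ 1.65 := by nlinarith
    have hexpneg : Real.exp (-(1:ℝ)/2) = (Real.exp (1/2))⁻¹ := by
      rw [show -(1:ℝ)/2 = -(1/2) by ring, Real.exp_neg]
    rw [hexpneg]
    have h1 : (2.6:ℝ)⁻¹ ≤ (Real.sqrt (2 * Real.pi))⁻¹ := by
      apply inv_anti₀ hS0 hS
    have h2 : (1.65:ℝ)⁻¹ ≤ (Real.exp (1/2))⁻¹ := by
      apply inv_anti₀ hEpos hEle
    have h3 : (0:ℝ) < (Real.exp (1/2))⁻¹ := by positivity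
    calc (1:ℝ)/5 ≤ (2.6:ℝ)⁻¹ * (1.65:ℝ)⁻¹ := by norm_num
      _ ≤ (Real.sqrt (2 * Real.pi))⁻¹ * (Real.exp (1/2))⁻¹ := by
          apply mul_le_mul h1 h2 (by norm_num) (le_of_lt (by positivity))
  -- lower bound on the central mass
  have hIcc : ENNReal.ofReal (2 * t' / 5) ≤ m (Set.Icc (μ - t') (μ + t')) := by
    rw [hm, gaussianReal_apply _ hv]
    have hlb : ∀ y ∈ Set.Icc (μ - t') (μ + t'),
        ENNReal.ofReal ((Real.sqrt (2 * Real.pi))⁻¹ * Real.exp (-(1:ℝ)/2))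
          ≤ gaussianPDF μ 1 y := by
      intro y hy
      rw [gaussianPDF]
      refine ENNReal.ofReal_le_ofReal ?_
      rw [gaussianPDFReal]
      simp only [NNReal.coe_one, mul_one]
      refine mul_le_mul_of_nonneg_left ?_ (by positivity)
      refine Real.exp_le_exp.2 ?_
      have h1 : |y - μ| ≤ t' := by
        rw [abs_le]; constructor
        · linarith [hy.1]
        · linarith [hy.2]
      have h2 : (y - μ)^2 ≤ 1 := by nlinarith [abs_nonneg (y - μ), sq_abs (y - μ)]
      rw [div_le_div_iff₀ (by norm_num) (by norm_num)]
      nlinarith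
    calc ENNReal.ofReal (2 * t' / 5)
        ≤ ENNReal.ofReal ((Real.sqrt (2 * Real.pi))⁻¹ * Real.exp (-(1:ℝ)/2))
            * volume (Set.Icc (μ - t') (μ + t')) := by
          rw [Real.volume_Icc, show μ + t' - (μ - t') = 2 * t' by ring,
            ← ENNReal.ofReal_mul (by positivity)]
          refine ENNReal.ofReal_le_ofReal ?_
          nlinarith
        _ ≤ ∫⁻ y in Set.Icc (μ - t') (μ + t'), gaussianPDF μ 1 y := by
          rw [← setLIntegral_const]
          exact setLIntegral_mono (measurable_gaussianPDF μ 1) hlb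
  -- combine
  have hcompl : (Set.Icc (μ - t') (μ + t'))ᶜ = Set.Iio (μ - t') ∪ Set.Ioi (μ + t') := by
    ext y
    simp only [Set.mem_compl_iff, Set.mem_Icc, not_and_or, not_le, Set.mem_union,
      Set.mem_Iio, Set.mem_Ioi]
  have hdisj : Disjoint (Set.Iio (μ - t')) (Set.Ioi (μ + t')) := by
    rw [Set.disjoint_left]
    intro y hy1 hy2
    simp only [Set.mem_Iio] at hy1
    simp only [Set.mem_Ioi] at hy2
    linarith
  have h1 : m (Set.Iio (μ - t')) + m (Set.Ioi (μ + t')) = 1 - m (Set.Icc (μ - t') (μ + t')) := by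
    rw [← measure_union hdisj measurableSet_Ioi, ← hcompl,
      prob_compl_eq_one_sub measurableSet_Icc]
  rw [htail_eq t'] at h1
  have hIccle : m (Set.Icc (μ - t') (μ + t')) ≤ 1 := prob_le_one
  have hIccR : 2 * t' / 5 ≤ (m (Set.Icc (μ - t') (μ + t'))).toReal := by
    have := ENNReal.toReal_mono (measure_ne_top m _) hIcc
    rwa [ENNReal.toReal_ofReal (by positivity)] at this
  have hq : (m (Set.Ioi (μ + t'))).toReal ≤ 1/2 - t'/5 := by
    have h2 : (m (Set.Ioi (μ + t'))).toReal + (m (Set.Ioi (μ + t'))).toReal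
        = 1 - (m (Set.Icc (μ - t') (μ + t'))).toReal := by
      have := congrArg ENNReal.toReal h1
      rwa [ENNReal.toReal_add (measure_ne_top m _) (measure_ne_top m _),
        ENNReal.toReal_sub_of_le hIccle ENNReal.one_ne_top, ENNReal.toReal_one] at this
    linarith
  have hmono1 : (m (Set.Ioi (μ + t))).toReal ≤ (m (Set.Ioi (μ + t'))).toReal :=
    ENNReal.toReal_mono (measure_ne_top m _)
      (measure_mono (Set.Ioi_subset_Ioi (by linarith)))
  have hmono2 : (m (Set.Iio (μ - t))).toReal ≤ (m (Set.Ioi (μ + t'))).toReal := by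
    rw [htail_eq t]
    exact hmono1
  exact ⟨le_trans hmono1 hq, le_trans hmono2 hq⟩

/-- robustness of the sample median under Huber contamination of `N(μ,1)`
with `ε < 1/4`: there are universal constants `C, c > 0` such that for any `δ ∈ (0,1)`
with `√(log(1/δ)/n) ≤ c`, the sample median `μ̂` (any point splitting the sample in half)
satisfies `|μ̂ - μ| ≤ C(√(log(1/δ)/n) ∨ ε)` with probability at least `1 - 2δ`,
uniformly over `μ` and `Q`. -/
theorem stmt13 :
    ∃ C > (0:ℝ), ∃ c > (0:ℝ), ∀ (n : ℕ), 0 < n → ∀ (μ ε : ℝ), 0 ≤ ε → ε < 1/4 →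
      ∀ (Q : Measure ℝ), IsProbabilityMeasure Q →
      ∀ (med : (Fin n → ℝ) → ℝ),
      (∀ x : Fin n → ℝ,
        (n : ℝ) / 2 ≤ (Finset.univ.filter (fun i => x i ≤ med x)).card ∧
        (n : ℝ) / 2 ≤ (Finset.univ.filter (fun i => med x ≤ x i)).card) →
      ∀ δ : ℝ, 0 < δ → δ < 1 → Real.sqrt (Real.log (1/δ) / n) ≤ c →
      ((Measure.pi (fun _ : Fin n => mix ε (gaussianReal μ 1) Q))
          {x | C * max (Real.sqrt (Real.log (1/δ) / n)) ε < |med x - μ|}).toReal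
        ≤ 2 * δ := by
  classical
  refine ⟨20, by norm_num, 1/100, by norm_num, ?_⟩
  intro n hn μ ε hε0 hε Q hQ med hmed δ hδ0 hδ1 hδc
  set s := Real.sqrt (Real.log (1/δ) / n) with hs
  have hlogpos : 0 < Real.log (1/δ) := Real.log_pos (one_lt_one_div hδ0 hδ1)
  have hnpos : (0:ℝ) < n := Nat.cast_pos.2 hn
  have hs0 : 0 < s := Real.sqrt_pos.2 (div_pos hlogpos hnpos)
  set M := max s ε with hM
  have hM0 : 0 < M := lt_of_lt_of_le hs0 (le_max_left _ _)
  have hsM : s ≤ M := le_max_left _ _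
  have hεM : ε ≤ M := le_max_right _ _
  set t := (20:ℝ) * M with htdef
  have ht0 : 0 < t := by positivity
  set ν := mix ε (gaussianReal μ 1) Q with hν
  have hν_univ : ν Set.univ = 1 := by
    rw [hν, mix]
    simp only [Measure.coe_add, Measure.coe_smul, Pi.add_apply, Pi.smul_apply,
      measure_univ, smul_eq_mul, mul_one]
    rw [← ENNReal.ofReal_add (by linarith) hε0]
    norm_num
  have hνprob : IsProbabilityMeasure ν := ⟨hν_univ⟩
  -- single-sample tail probability bound
  have hgauss := gauss_tails μ t (le_of_lt ht0)
  set t' := min t 1 with ht'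
  have ht'0 : 0 ≤ t' := le_min (le_of_lt ht0) zero_le_one
  have hmixA : ∀ A : Set ℝ, (gaussianReal μ 1 A).toReal ≤ 1/2 - t'/5 →
      (ν A).toReal ≤ 1/2 - ((1-ε) * (t'/5) - ε/2) := by
    intro A hGA
    have hfin1 : ENNReal.ofReal (1-ε) * gaussianReal μ 1 A ≠ ⊤ :=
      ENNReal.mul_ne_top ENNReal.ofReal_ne_top (measure_ne_top _ _)
    have hfin2 : ENNReal.ofReal ε * Q A ≠ ⊤ :=
      ENNReal.mul_ne_top ENNReal.ofReal_ne_top (measure_ne_top _ _)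
    have hνA : (ν A).toReal
        = (1-ε) * (gaussianReal μ 1 A).toReal + ε * (Q A).toReal := by
      rw [hν, mix]
      simp only [Measure.coe_add, Measure.coe_smul, Pi.add_apply, Pi.smul_apply, smul_eq_mul]
      rw [ENNReal.toReal_add hfin1 hfin2, ENNReal.toReal_mul, ENNReal.toReal_mul,
        ENNReal.toReal_ofReal (by linarith), ENNReal.toReal_ofReal hε0]
    have hQA : (Q A).toReal ≤ 1 := by
      have := prob_le_one (μ := Q) (s := A)
      simpa using ENNReal.toReal_mono ENNReal.one_ne_top this
    have hQA0 : 0 ≤ (Q A).toReal := ENNReal.toReal_nonneg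
    rw [hνA]
    have h1ε : (0:ℝ) ≤ 1 - ε := by linarith
    nlinarith
  set γ := (1-ε) * (t'/5) - ε/2 with hγ
  have hγ2s : 2 * s ≤ γ := by
    rcases le_or_gt t 1 with hcase | hcase
    · -- t ≤ 1, t' = t
      have ht'' : t' = t := min_eq_left hcase
      rw [hγ, ht'', htdef]
      have hεt : ε ≤ t / 20 := by rw [htdef]; linarith
      nlinarith
    · -- t > 1, t' = 1
      have ht'' : t' = 1 := min_eq_right (le_of_lt hcase)
      rw [hγ, ht'']
      have hsc : s ≤ 1/100 := hδc
      nlinarith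
  have hγ0 : 0 ≤ γ := le_trans (by positivity) hγ2s
  clear_value s M t ν t' γ
  -- the two tail events
  have hbound : ∀ A : Set ℝ, MeasurableSet A → (ν A).toReal ≤ 1/2 - γ →
      ∀ E : Set (Fin n → ℝ),
      (∀ x ∈ E, (n : ℝ)/2 ≤ ((Finset.univ.filter fun i => x i ∈ A).card : ℝ)) →
      (Measure.pi fun _ : Fin n => ν) E ≤ ENNReal.ofReal δ := by
    intro A hAmeas hAp E hE
    refine le_trans (tail_bound ν hAmeas hγ0 hAp E hE) (ENNReal.ofReal_le_ofReal ?_)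
    have hsq : s^2 = Real.log (1/δ) / n := by
      rw [hs]; exact Real.sq_sqrt (le_of_lt (div_pos hlogpos hnpos))
    have hns2 : (n:ℝ) * s^2 = Real.log (1/δ) := by
      rw [hsq]; field_simp
    have hγs : 4 * s^2 ≤ γ^2 := by
      have h := mul_self_le_mul_self (by positivity : (0:ℝ) ≤ 2*s) hγ2s
      calc 4 * s^2 = (2*s) * (2*s) := by ring
        _ ≤ γ * γ := h
        _ = γ^2 := by ring
    have hexp : Real.log (1/δ) ≤ (n:ℝ) * γ^2 / 2 := by
      calc Real.log (1/δ) = (n:ℝ) * s^2 := hns2.symm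
        _ ≤ (n:ℝ) * (γ^2/2) := by
            have : s^2 ≤ γ^2/2 := by nlinarith [sq_nonneg γ]
            exact mul_le_mul_of_nonneg_left this (le_of_lt hnpos)
        _ = (n:ℝ) * γ^2 / 2 := by ring
    calc Real.exp (-((n:ℝ) * γ^2 / 2)) ≤ Real.exp (-(Real.log (1/δ))) :=
          Real.exp_le_exp.2 (by linarith)
      _ = δ := by
          rw [Real.exp_neg, Real.exp_log (by positivity)]
          simp
  -- inclusion of the bad event in the union of the two tail events
  set Epos := {x : Fin n → ℝ | t < med x - μ} with hEpos
  set Eneg := {x : Fin n → ℝ | med x - μ < -t} with hEneg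
  clear_value Epos Eneg
  have hincl : {x : Fin n → ℝ | t < |med x - μ|} ⊆ Epos ∪ Eneg := by
    intro x hx
    simp only [Set.mem_setOf_eq] at hx
    rcases lt_abs.1 hx with hcase | hcase
    · left
      rw [hEpos, Set.mem_setOf_eq]
      exact hcase
    · right
      rw [hEneg, Set.mem_setOf_eq]
      linarith
  have hcountpos : ∀ x ∈ Epos, (n : ℝ)/2 ≤
      ((Finset.univ.filter fun i => x i ∈ Set.Ioi (μ + t)).card : ℝ) := by
    intro x hx
    rw [hEpos, Set.mem_setOf_eq] at hx
    have hcard : (Finset.univ.filter fun i => med x ≤ x i)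
        ⊆ (Finset.univ.filter fun i => x i ∈ Set.Ioi (μ + t)) := by
      intro i hi
      simp only [Finset.mem_filter, Finset.mem_univ, true_and] at hi ⊢
      simp only [Set.mem_Ioi]
      linarith
    exact le_trans (hmed x).2 (Nat.cast_le.mpr (Finset.card_le_card hcard))
  have hcountneg : ∀ x ∈ Eneg, (n : ℝ)/2 ≤
      ((Finset.univ.filter fun i => x i ∈ Set.Iio (μ - t)).card : ℝ) := by
    intro x hx
    rw [hEneg, Set.mem_setOf_eq] at hx
    have hcard : (Finset.univ.filter fun i => x i ≤ med x)
        ⊆ (Finset.univ.filter fun i => x i ∈ Set.Iio (μ - t)) := by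
      intro i hi
      simp only [Finset.mem_filter, Finset.mem_univ, true_and] at hi ⊢
      simp only [Set.mem_Iio]
      linarith
    exact le_trans (hmed x).1 (Nat.cast_le.mpr (Finset.card_le_card hcard))
  have hppos : (ν (Set.Ioi (μ + t))).toReal ≤ 1/2 - γ := by
    exact hmixA _ hgauss.1
  have hpneg : (ν (Set.Iio (μ - t))).toReal ≤ 1/2 - γ := by
    exact hmixA _ hgauss.2
  have hfinal : (Measure.pi fun _ : Fin n => ν)
      {x : Fin n → ℝ | t < |med x - μ|} ≤ ENNReal.ofReal (2 * δ) := by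
    calc (Measure.pi fun _ : Fin n => ν) {x : Fin n → ℝ | t < |med x - μ|}
        ≤ (Measure.pi fun _ : Fin n => ν) (Epos ∪ Eneg) := measure_mono hincl
      _ ≤ (Measure.pi fun _ : Fin n => ν) Epos + (Measure.pi fun _ : Fin n => ν) Eneg :=
          measure_union_le _ _
      _ ≤ ENNReal.ofReal δ + ENNReal.ofReal δ := by
          gcongr
          · exact hbound _ measurableSet_Ioi hppos Epos hcountpos
          · exact hbound _ measurableSet_Iio hpneg Eneg hcountneg
      _ = ENNReal.ofReal (2 * δ) := by
          rw [← ENNReal.ofReal_add (le_of_lt hδ0) (le_of_lt hδ0)]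
          congr 1; ring
  exact ENNReal.toReal_le_of_le_ofReal (by linarith) hfinal
end

section
/- In the Gaussian white noise model with Hölder class H(β,M) = {f : sup_{l,k} 2^{l(1/2+β)}|f_{lk}| ≤ M}, the modulus of continuity under supremum norm satisfies ω(ε) ≥ c·ε^{2β/(2β+1)} for a constant c > 0 and all sufficiently small ε > 0: there exist f₁, f₂ ∈ H(β,M) with TV(P_{f₁},P_{f₂}) ≤ ε/(1−ε) and ‖f₁−f₂‖_∞ ≥ c·ε^{2β/(2β+1)}. -/
open MeasureTheory ProbabilityTheory

/-- Index set of the wavelet sequence model. -/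
abbrev WIdx := Σ l : ℕ, Fin (2 ^ l)


open Set
open scoped ENNReal NNReal symmDiff

-- pointwise pdf comparison
lemma pdf_le_left {ε x : ℝ} (hε : 0 < ε) (hx : x ≤ ε/2) :
    gaussianPDF ε 1 x ≤ gaussianPDF 0 1 x := by
  refine ENNReal.ofReal_le_ofReal ?_
  unfold gaussianPDFReal
  have h1 : (0:ℝ) ≤ (Real.sqrt (2 * Real.pi * (1:ℝ≥0)))⁻¹ := by positivity
  refine mul_le_mul_of_nonneg_left ?_ h1
  refine Real.exp_le_exp.mpr ?_
  have : ((1:ℝ≥0):ℝ) = 1 := rfl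
  rw [this]
  have h2 : x^2 ≤ (x - ε)^2 := by nlinarith
  nlinarith

lemma pdf_le_right {ε x : ℝ} (hε : 0 < ε) (hx : ε/2 ≤ x) :
    gaussianPDF 0 1 x ≤ gaussianPDF ε 1 x := by
  refine ENNReal.ofReal_le_ofReal ?_
  unfold gaussianPDFReal
  have h1 : (0:ℝ) ≤ (Real.sqrt (2 * Real.pi * (1:ℝ≥0)))⁻¹ := by positivity
  refine mul_le_mul_of_nonneg_left ?_ h1
  refine Real.exp_le_exp.mpr ?_
  have : ((1:ℝ≥0):ℝ) = 1 := rfl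
  rw [this]
  have h2 : (x - ε)^2 ≤ x^2 := by nlinarith
  nlinarith

-- set comparison for gaussians
lemma gr_mono_on {m₁ m₂ : ℝ} {I : Set ℝ} (h : ∀ x ∈ I, gaussianPDF m₂ 1 x ≤ gaussianPDF m₁ 1 x)
    {A : Set ℝ} (hA : MeasurableSet A) (hAI : A ⊆ I) :
    gaussianReal m₂ 1 A ≤ gaussianReal m₁ 1 A := by
  rw [gaussianReal_apply _ one_ne_zero, gaussianReal_apply _ one_ne_zero]
  exact setLIntegral_mono (measurable_gaussianPDF _ _) (fun x hx => h x (hAI hx))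

-- master lemma
lemma master {ν₁ ν₂ : Measure ℝ} [IsFiniteMeasure ν₁] [IsFiniteMeasure ν₂] {I : Set ℝ}
    (hI : MeasurableSet I)
    (h₁ : ∀ A : Set ℝ, MeasurableSet A → A ⊆ I → ν₂ A ≤ ν₁ A)
    (h₂ : ∀ A : Set ℝ, MeasurableSet A → A ⊆ Iᶜ → ν₁ A ≤ ν₂ A)
    {D : ℝ≥0∞} (hD : ν₁ I ≤ ν₂ I + D)
    (A : Set ℝ) (hA : MeasurableSet A) : ν₁ A ≤ ν₂ A + D := by
  have key : ν₁ A + ν₂ I ≤ ν₂ A + ν₁ I := by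
    have e1 : ν₁ (A ∩ I) + ν₁ (A \ I) = ν₁ A := measure_inter_add_diff A hI
    have e2 : ν₂ (A ∩ I) + ν₂ (A \ I) = ν₂ A := measure_inter_add_diff A hI
    have e3 : ν₁ (I ∩ A) + ν₁ (I \ A) = ν₁ I := measure_inter_add_diff I hA
    have e4 : ν₂ (I ∩ A) + ν₂ (I \ A) = ν₂ I := measure_inter_add_diff I hA
    have hIA : I ∩ A = A ∩ I := inter_comm I A
    rw [← e1, ← e2, ← e3, ← e4, hIA]
    have g1 : ν₁ (A \ I) ≤ ν₂ (A \ I) :=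
      h₂ _ (hA.diff hI) (diff_subset_iff.mpr (by simp [Set.union_comm, Set.subset_union_left]))
    have g2 : ν₂ (I \ A) ≤ ν₁ (I \ A) := h₁ _ (hI.diff hA) diff_subset
    calc ν₁ (A ∩ I) + ν₁ (A \ I) + (ν₂ (A ∩ I) + ν₂ (I \ A))
        ≤ ν₁ (A ∩ I) + ν₂ (A \ I) + (ν₂ (A ∩ I) + ν₁ (I \ A)) := by
          gcongr
      _ = ν₂ (A ∩ I) + ν₂ (A \ I) + (ν₁ (A ∩ I) + ν₁ (I \ A)) := by ring
  have h2' : ν₁ A + ν₂ I ≤ ν₂ A + ν₂ I + D := by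
    calc ν₁ A + ν₂ I ≤ ν₂ A + ν₁ I := key
      _ ≤ ν₂ A + (ν₂ I + D) := by gcongr
      _ = ν₂ A + ν₂ I + D := by ring
  have hfin : ν₂ I ≠ ⊤ := measure_ne_top _ _
  have := tsub_le_tsub h2' (le_refl (ν₂ I))
  calc ν₁ A = ν₁ A + ν₂ I - ν₂ I := by rw [ENNReal.add_sub_cancel_right hfin]
    _ ≤ ν₂ A + ν₂ I + D - ν₂ I := this
    _ = ν₂ A + D := by
        rw [show ν₂ A + ν₂ I + D = ν₂ A + D + ν₂ I by ring, ENNReal.add_sub_cancel_right hfin]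

lemma gauss1d {ε : ℝ} (hε : 0 < ε) (A : Set ℝ) (hA : MeasurableSet A) :
    gaussianReal 0 1 A ≤ gaussianReal ε 1 A + ENNReal.ofReal ε ∧
    gaussianReal ε 1 A ≤ gaussianReal 0 1 A + ENNReal.ofReal ε := by
  have hmap : (gaussianReal 0 1).map (· + ε) = gaussianReal ε 1 := by
    rw [gaussianReal_map_add_const, zero_add]
  have hIio : gaussianReal ε 1 (Iio (ε/2)) = gaussianReal 0 1 (Iio (-(ε/2))) := by
    rw [← hmap, Measure.map_apply (measurable_add_const ε) measurableSet_Iio]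
    congr 1
    ext x
    simp only [mem_preimage, mem_Iio]
    constructor <;> intro h <;> linarith
  have hIci : gaussianReal ε 1 (Ici (ε/2)) = gaussianReal 0 1 (Ici (-(ε/2))) := by
    rw [← hmap, Measure.map_apply (measurable_add_const ε) measurableSet_Ici]
    congr 1
    ext x
    simp only [mem_preimage, mem_Ici]
    constructor <;> intro h <;> linarith
  have hIco : gaussianReal 0 1 (Ico (-(ε/2)) (ε/2)) ≤ ENNReal.ofReal ε := by
    rw [gaussianReal_apply _ one_ne_zero]
    calc ∫⁻ x in Ico (-(ε/2)) (ε/2), gaussianPDF 0 1 x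
        ≤ ∫⁻ _ in Ico (-(ε/2)) (ε/2), 1 := by
          refine setLIntegral_mono measurable_const (fun x _ => ?_)
          unfold gaussianPDF
          refine ENNReal.ofReal_le_one.mpr ?_
          unfold gaussianPDFReal
          have h2π : 1 ≤ Real.sqrt (2 * Real.pi * (1:ℝ≥0)) := by
            rw [show ((1:ℝ≥0):ℝ) = 1 from rfl, mul_one]
            rw [show (1:ℝ) = Real.sqrt 1 by simp]
            refine Real.sqrt_le_sqrt ?_
            nlinarith [Real.pi_gt_three]
          calc (Real.sqrt (2 * Real.pi * (1:ℝ≥0)))⁻¹ * Real.exp (-(x - 0)^2 / (2 * (1:ℝ≥0)))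
              ≤ 1 * 1 := by
                refine mul_le_mul ?_ ?_ (Real.exp_nonneg _) zero_le_one
                · exact inv_le_one_of_one_le₀ h2π
                · refine Real.exp_le_one_iff.mpr ?_
                  have : (0:ℝ) ≤ (x - 0)^2 := sq_nonneg _
                  have h1 : (0:ℝ) < 2 * (1:ℝ≥0) := by norm_num
                  exact div_nonpos_of_nonpos_of_nonneg (by linarith) h1.le
            _ = 1 := by ring
      _ = volume (Ico (-(ε/2)) (ε/2)) := setLIntegral_one _
      _ = ENNReal.ofReal ε := by rw [Real.volume_Ico]; congr 1; ring
  have hD1 : gaussianReal 0 1 (Iio (ε/2)) ≤ gaussianReal ε 1 (Iio (ε/2)) + ENNReal.ofReal ε := by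
    rw [hIio]
    have hsub : Iio (ε/2) ⊆ Iio (-(ε/2)) ∪ Ico (-(ε/2)) (ε/2) := by
      intro x hx
      rcases lt_or_ge x (-(ε/2)) with h | h
      · exact Or.inl h
      · exact Or.inr ⟨h, hx⟩
    calc gaussianReal 0 1 (Iio (ε/2))
        ≤ gaussianReal 0 1 (Iio (-(ε/2))) + gaussianReal 0 1 (Ico (-(ε/2)) (ε/2)) :=
          (measure_mono hsub).trans (measure_union_le _ _)
      _ ≤ gaussianReal 0 1 (Iio (-(ε/2))) + ENNReal.ofReal ε := by gcongr
  have hD2 : gaussianReal ε 1 (Ici (ε/2)) ≤ gaussianReal 0 1 (Ici (ε/2)) + ENNReal.ofReal ε := by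
    rw [hIci]
    have hsub : Ici (-(ε/2)) ⊆ Ici (ε/2) ∪ Ico (-(ε/2)) (ε/2) := by
      intro x hx
      rcases le_or_gt (ε/2) x with h | h
      · exact Or.inl h
      · exact Or.inr ⟨hx, h⟩
    calc gaussianReal 0 1 (Ici (-(ε/2)))
        ≤ gaussianReal 0 1 (Ici (ε/2)) + gaussianReal 0 1 (Ico (-(ε/2)) (ε/2)) :=
          (measure_mono hsub).trans (measure_union_le _ _)
      _ ≤ gaussianReal 0 1 (Ici (ε/2)) + ENNReal.ofReal ε := by gcongr
  constructor
  · refine master measurableSet_Iio ?_ ?_ hD1 A hA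
    · intro B hB hBI
      exact gr_mono_on (fun x hx => pdf_le_left hε (le_of_lt hx)) hB hBI
    · intro B hB hBI
      refine gr_mono_on (fun x hx => pdf_le_right hε ?_) hB hBI
      simpa using hx
  · refine master measurableSet_Ici ?_ ?_ hD2 A hA
    · intro B hB hBI
      exact gr_mono_on (fun x hx => pdf_le_right hε hx) hB hBI
    · intro B hB hBI
      refine gr_mono_on (fun x hx => pdf_le_left hε ?_) hB hBI
      simp only [mem_compl_iff, mem_Ici, not_le] at hx
      exact hx.le

-- translation of a product gaussian
lemma pi_shift {κ : Type*} [Fintype κ] (c : κ → ℝ) :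
    (Measure.pi fun _ : κ => gaussianReal 0 1).map (fun y i => c i + y i)
      = Measure.pi (fun i => gaussianReal (c i) 1) := by
  refine (Measure.pi_eq (fun A hA => ?_)).symm
  have hmeas : Measurable (fun (y : κ → ℝ) i => c i + y i) :=
    measurable_pi_lambda _ (fun i => by fun_prop)
  rw [Measure.map_apply hmeas (MeasurableSet.univ_pi hA)]
  have hpre : (fun (y : κ → ℝ) i => c i + y i) ⁻¹' (univ.pi A)
      = univ.pi (fun i => (fun x => x + c i) ⁻¹' A i) := by
    ext y
    simp only [mem_preimage, mem_pi, mem_univ, forall_true_left, true_implies]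
    refine forall_congr' (fun i => ?_)
    rw [add_comm]
  rw [hpre, Measure.pi_pi]
  refine Finset.prod_congr rfl (fun i _ => ?_)
  rw [← Measure.map_apply (measurable_add_const (c i)) (hA i), gaussianReal_map_add_const,
    zero_add]

lemma map_equiv_apply {α β : Type*} [MeasurableSpace α] [MeasurableSpace β] (μ : Measure α)
    (F : α ≃ᵐ β) {S : Set α} (hS : MeasurableSet S) :
    (μ.map F) (⇑F.symm ⁻¹' S) = μ S := by
  rw [Measure.map_apply F.measurable (F.symm.measurable hS)]
  congr 1
  ext x
  simp

lemma prod_cmp {α β : Type*} [MeasurableSpace α] [MeasurableSpace β]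
    {μ₁ μ₂ : Measure α} {ρ : Measure β} [IsProbabilityMeasure ρ]
    [IsFiniteMeasure μ₁] [IsFiniteMeasure μ₂] {D : ℝ≥0∞}
    (hcmp : ∀ A : Set α, MeasurableSet A → μ₁ A ≤ μ₂ A + D)
    (T : Set (α × β)) (hT : MeasurableSet T) :
    (μ₁.prod ρ) T ≤ (μ₂.prod ρ) T + D := by
  rw [Measure.prod_apply_symm hT, Measure.prod_apply_symm hT]
  have hslice : ∀ y, MeasurableSet ((fun x => (x, y)) ⁻¹' T) :=
    fun y => hT.preimage (measurable_id.prodMk measurable_const)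
  calc ∫⁻ y, μ₁ ((fun x => (x, y)) ⁻¹' T) ∂ρ
      ≤ ∫⁻ y, (μ₂ ((fun x => (x, y)) ⁻¹' T) + D) ∂ρ :=
        lintegral_mono (fun y => hcmp _ (hslice y))
    _ = ∫⁻ y, μ₂ ((fun x => (x, y)) ⁻¹' T) ∂ρ + D * ρ univ := by
        rw [lintegral_add_right _ measurable_const, lintegral_const]
    _ = ∫⁻ y, μ₂ ((fun x => (x, y)) ⁻¹' T) ∂ρ + D := by rw [measure_univ, mul_one]

lemma pi_single_cmp {ι : Type*} [Fintype ι] [Unique ι] (m₁ m₂ : ℝ) {D : ℝ≥0∞}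
    (hcmp : ∀ A : Set ℝ, MeasurableSet A → gaussianReal m₁ 1 A ≤ gaussianReal m₂ 1 A + D)
    (S : Set (ι → ℝ)) (hS : MeasurableSet S) :
    Measure.pi (fun _ : ι => gaussianReal m₁ 1) S
      ≤ Measure.pi (fun _ : ι => gaussianReal m₂ 1) S + D := by
  set eU := MeasurableEquiv.piUnique (fun _ : ι => ℝ) with heU
  have h₁ := (measurePreserving_piUnique (fun _ : ι => gaussianReal m₁ 1)).map_eq
  have h₂ := (measurePreserving_piUnique (fun _ : ι => gaussianReal m₂ 1)).map_eq
  rw [← map_equiv_apply (Measure.pi fun _ : ι => gaussianReal m₁ 1) eU hS,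
    ← map_equiv_apply (Measure.pi fun _ : ι => gaussianReal m₂ 1) eU hS, h₁, h₂]
  exact hcmp _ (eU.symm.measurable hS)

-- finite dimensional comparison
lemma findim {ε : ℝ} (hε : 0 < ε) {κ : Type*} [Fintype κ] [DecidableEq κ] (j₀ : κ)
    (g₂ : κ → ℝ) (hg : ∀ i, g₂ i = if i = j₀ then ε else 0)
    (S : Set (κ → ℝ)) (hS : MeasurableSet S) :
    Measure.pi (fun _ : κ => gaussianReal 0 1) S
        ≤ Measure.pi (fun i => gaussianReal (g₂ i) 1) S + ENNReal.ofReal ε ∧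
    Measure.pi (fun i => gaussianReal (g₂ i) 1) S
        ≤ Measure.pi (fun _ : κ => gaussianReal 0 1) S + ENNReal.ofReal ε := by
  classical
  set p : κ → Prop := fun i => i = j₀ with hp
  haveI hu : Unique {i : κ // p i} := ⟨⟨⟨j₀, rfl⟩⟩, fun x => Subtype.ext x.2⟩
  set eP := MeasurableEquiv.piEquivPiSubtypeProd (fun _ : κ => ℝ) p with heP
  have e1 := (measurePreserving_piEquivPiSubtypeProd (fun _ : κ => gaussianReal 0 1) p).map_eq
  have e2 := (measurePreserving_piEquivPiSubtypeProd
    (fun i : κ => gaussianReal (g₂ i) 1) p).map_eq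
  have hrest : (fun i : {i : κ // ¬ p i} => gaussianReal (g₂ i.1) 1)
      = fun _ : {i : κ // ¬ p i} => gaussianReal 0 1 := by
    funext i
    rw [hg i.1, if_neg i.2]
  have hsub : (fun i : {i : κ // p i} => gaussianReal (g₂ i.1) 1)
      = fun _ : {i : κ // p i} => gaussianReal ε 1 := by
    funext i
    rw [hg i.1, if_pos i.2]
  rw [← map_equiv_apply (Measure.pi fun _ : κ => gaussianReal 0 1) eP hS,
    ← map_equiv_apply (Measure.pi fun i : κ => gaussianReal (g₂ i) 1) eP hS, e1, e2,
    hrest, hsub]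
  have hT : MeasurableSet (⇑eP.symm ⁻¹' S) := eP.symm.measurable hS
  constructor
  · refine prod_cmp (fun A hA => ?_) _ hT
    exact @pi_single_cmp (Subtype p) (Subtype.fintype p) hu 0 ε _ (fun B hB => (gauss1d hε B hB).1) A hA
  · refine prod_cmp (fun A hA => ?_) _ hT
    exact @pi_single_cmp (Subtype p) (Subtype.fintype p) hu ε 0 _ (fun B hB => (gauss1d hε B hB).2) A hA

lemma marg (γ : Measure (WIdx → ℝ)) [IsProbabilityMeasure γ]
    (hγ : ∀ s : Finset WIdx,
      γ.map (fun x (i : s) => x i.1) = Measure.pi (fun _ : s => gaussianReal 0 1))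
    (f : WIdx → ℝ) (s : Finset WIdx) :
    (γ.map (fun z i => f i + z i)).map (fun x (i : s) => x i.1)
      = Measure.pi (fun i : s => gaussianReal (f i.1) 1) := by
  have hshift : Measurable (fun (z : WIdx → ℝ) i => f i + z i) :=
    measurable_pi_lambda _ (fun i => by fun_prop)
  have hres : Measurable (fun (x : WIdx → ℝ) (i : s) => x i.1) :=
    measurable_pi_lambda _ (fun i => measurable_pi_apply i.1)
  have hres2 : Measurable (fun (y : (i : s) → ℝ) (i : s) => f i.1 + y i) :=
    measurable_pi_lambda _ (fun i => by fun_prop)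
  rw [Measure.map_map hres hshift]
  have hcomp : (fun x (i : s) => x i.1) ∘ (fun (z : WIdx → ℝ) i => f i + z i)
      = (fun (y : (i : s) → ℝ) (i : s) => f i.1 + y i) ∘ (fun x (i : s) => x i.1) := rfl
  rw [hcomp, ← Measure.map_map hres2 hres, hγ s, pi_shift]

lemma cyl_bound (γ : Measure (WIdx → ℝ)) [IsProbabilityMeasure γ]
    (hγ : ∀ s : Finset WIdx,
      γ.map (fun x (i : s) => x i.1) = Measure.pi (fun _ : s => gaussianReal 0 1))
    {ε : ℝ} (hε : 0 < ε) (i₀ : WIdx)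
    (B : Set (WIdx → ℝ)) (hB : B ∈ measurableCylinders (fun _ : WIdx => ℝ)) :
    (γ.map (fun z i => (0:ℝ) + z i)) B
        ≤ (γ.map (fun z i => (if i = i₀ then ε else 0) + z i)) B + ENNReal.ofReal ε ∧
    (γ.map (fun z i => (if i = i₀ then ε else 0) + z i)) B
        ≤ (γ.map (fun z i => (0:ℝ) + z i)) B + ENNReal.ofReal ε := by
  classical
  obtain ⟨s, S, hS, rfl⟩ := (mem_measurableCylinders _).mp hB
  set t : Finset WIdx := insert i₀ s with ht
  have hst : s ⊆ t := Finset.subset_insert _ _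
  set S' : Set ((i : t) → ℝ) := (Finset.restrict₂ (π := fun _ => ℝ) hst) ⁻¹' S with hS'def
  have hS' : MeasurableSet S' := (Finset.measurable_restrict₂ hst) hS
  have hcyl : cylinder s S = (fun (x : WIdx → ℝ) (i : t) => x i.1) ⁻¹' S' := rfl
  rw [hcyl]
  have hres : Measurable (fun (x : WIdx → ℝ) (i : t) => x i.1) :=
    measurable_pi_lambda _ (fun i => measurable_pi_apply i.1)
  have happ : ∀ g : WIdx → ℝ,
      (γ.map (fun z i => g i + z i)) ((fun (x : WIdx → ℝ) (i : t) => x i.1) ⁻¹' S')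
        = Measure.pi (fun i : t => gaussianReal (g i.1) 1) S' := by
    intro g
    rw [← Measure.map_apply hres hS', marg γ hγ g t]
  rw [happ, happ]
  have hj : ((fun i => if i = i₀ then ε else 0) : WIdx → ℝ) ∘ (Subtype.val : t → WIdx)
      = fun i : t => if i = (⟨i₀, Finset.mem_insert_self i₀ s⟩ : t) then ε else 0 := by
    funext i
    simp only [Function.comp_apply]
    congr 1
    simp [Subtype.ext_iff]
  have h := findim hε (⟨i₀, Finset.mem_insert_self i₀ s⟩ : t)
    (fun i : t => if i.1 = i₀ then ε else 0)
    (fun i => by simp [Subtype.ext_iff]) S' hS'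
  exact h

open scoped symmDiff

lemma approx_bound {Ω : Type*} [inst : MeasurableSpace Ω] {P Q : Measure Ω}
    [IsProbabilityMeasure P] [IsProbabilityMeasure Q] {𝒜 : Set (Set Ω)}
    (halg : MeasureTheory.IsSetAlgebra 𝒜)
    (hgen : inst = MeasurableSpace.generateFrom 𝒜) {D : ℝ≥0∞}
    (hcyl : ∀ C ∈ 𝒜, P C ≤ Q C + D) {B : Set Ω} (hB : MeasurableSet B) :
    P B ≤ Q B + D := by
  have dense : (P + Q).MeasureDense 𝒜 :=
    Measure.MeasureDense.of_generateFrom_isSetAlgebra_finite (P + Q) halg hgen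
  have key : ∀ δ : ℝ, 0 < δ → P B ≤ Q B + D + ENNReal.ofReal δ := by
    intro δ hδ
    obtain ⟨C, hC, hΔ⟩ := dense.approx B hB (measure_ne_top _ _) (δ/2) (half_pos hδ)
    have hBC : B ⊆ C ∪ (B ∆ C) := by
      intro x hx
      by_cases hc : x ∈ C
      · exact Or.inl hc
      · exact Or.inr (Set.mem_symmDiff.mpr (Or.inl ⟨hx, hc⟩))
    have hCB : C ⊆ B ∪ (B ∆ C) := by
      intro x hx
      by_cases hb : x ∈ B
      · exact Or.inl hb
      · exact Or.inr (Set.mem_symmDiff.mpr (Or.inr ⟨hx, hb⟩))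
    have hPΔ : P (B ∆ C) ≤ (P + Q) (B ∆ C) := by
      rw [Measure.add_apply]; exact self_le_add_right _ _
    have hQΔ : Q (B ∆ C) ≤ (P + Q) (B ∆ C) := by
      rw [Measure.add_apply]; exact self_le_add_left _ _
    calc P B ≤ P C + P (B ∆ C) := (measure_mono hBC).trans (measure_union_le _ _)
      _ ≤ (Q C + D) + (P + Q) (B ∆ C) := by gcongr; exact hcyl C hC
      _ ≤ ((Q B + (P + Q) (B ∆ C)) + D) + (P + Q) (B ∆ C) := by
          gcongr
          exact (measure_mono hCB).trans ((measure_union_le _ _).trans (by gcongr))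
      _ = Q B + D + ((P + Q) (B ∆ C) + (P + Q) (B ∆ C)) := by ring
      _ ≤ Q B + D + (ENNReal.ofReal (δ/2) + ENNReal.ofReal (δ/2)) := by
          gcongr <;> exact hΔ.le
      _ = Q B + D + ENNReal.ofReal δ := by
          rw [← ENNReal.ofReal_add (by linarith) (by linarith), add_halves]
  refine ENNReal.le_of_forall_pos_le_add (fun η hη hfin => ?_)
  calc P B ≤ Q B + D + ENNReal.ofReal (η : ℝ) := key _ (by exact_mod_cast hη)
    _ = Q B + D + (η : ℝ≥0∞) := by rw [ENNReal.ofReal_coe_nnreal]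

lemma toReal_abs_bound {Ω : Type*} [MeasurableSpace Ω] {P Q : Measure Ω}
    [IsProbabilityMeasure P] [IsProbabilityMeasure Q] {ε : ℝ} (hε : 0 ≤ ε) {B : Set Ω}
    (h1 : P B ≤ Q B + ENNReal.ofReal ε) (h2 : Q B ≤ P B + ENNReal.ofReal ε) :
    |(P B).toReal - (Q B).toReal| ≤ ε := by
  rw [abs_sub_le_iff]
  have hfin : ∀ μ : Measure Ω, ∀ _ : IsProbabilityMeasure μ, μ B + ENNReal.ofReal ε ≠ ⊤ :=
    fun μ _ => ENNReal.add_ne_top.mpr ⟨measure_ne_top _ _, ENNReal.ofReal_ne_top⟩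
  constructor
  · have := ENNReal.toReal_mono (hfin Q ‹_›) h1
    rw [ENNReal.toReal_add (measure_ne_top _ _) ENNReal.ofReal_ne_top,
      ENNReal.toReal_ofReal hε] at this
    linarith
  · have := ENNReal.toReal_mono (hfin P ‹_›) h2
    rw [ENNReal.toReal_add (measure_ne_top _ _) ENNReal.ofReal_ne_top,
      ENNReal.toReal_ofReal hε] at this
    linarith

lemma arith1 {M ε a : ℝ} (hM : 0 < M) (hε : 0 < ε) (ha : 0 < a) {L : ℝ}
    (h : L * a ≤ Real.logb 2 (M/ε)) : ε ≤ M * 2 ^ (-L * a) := by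
  have hx : (0:ℝ) < M/ε := div_pos hM hε
  have h2 : (2:ℝ) ^ (L*a) ≤ M/ε := by
    calc (2:ℝ) ^ (L*a) ≤ 2 ^ (Real.logb 2 (M/ε)) :=
          Real.rpow_le_rpow_of_exponent_le one_le_two h
      _ = M/ε := Real.rpow_logb two_pos (by norm_num) hx
  have hp : (0:ℝ) < (2:ℝ) ^ (L*a) := Real.rpow_pos_of_pos two_pos _
  have h3 : (2:ℝ) ^ (L*a) * ε ≤ M := by
    rw [← le_div_iff₀ hε] at *
    exact h2
  rw [neg_mul, Real.rpow_neg (by norm_num : (0:ℝ) ≤ 2), ← div_eq_mul_inv]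
  rw [le_div_iff₀ hp]
  linarith [h3, mul_comm ((2:ℝ) ^ (L*a)) ε]

lemma arith2 {β M ε : ℝ} (hβ : 0 < β) (hM : 0 < M) (hε : 0 < ε) {L : ℝ}
    (hL : Real.logb 2 (M/ε) < (L+1) * (1/2+β)) :
    M ^ (1/(2*β+1)) * 2 ^ (-(1:ℝ)/2) * ε ^ (2*β/(2*β+1)) ≤ 2 ^ (L/2) * ε := by
  have hx : (0:ℝ) < M/ε := div_pos hM hε
  have hne : 2*β+1 ≠ 0 := by positivity
  have h3 : M/ε ≤ 2 ^ ((L+1) * (1/2+β)) := by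
    calc M/ε = 2 ^ (Real.logb 2 (M/ε)) := (Real.rpow_logb two_pos (by norm_num) hx).symm
      _ ≤ 2 ^ ((L+1) * (1/2+β)) := Real.rpow_le_rpow_of_exponent_le one_le_two hL.le
  have h4 : (M/ε) ^ (1/(2*β+1)) ≤ 2 ^ ((L+1)/2) := by
    calc (M/ε) ^ (1/(2*β+1)) ≤ ((2:ℝ) ^ ((L+1) * (1/2+β))) ^ (1/(2*β+1)) :=
          Real.rpow_le_rpow hx.le h3 (by positivity)
      _ = 2 ^ ((L+1) * (1/2+β) * (1/(2*β+1))) := by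
          rw [← Real.rpow_mul (by norm_num : (0:ℝ) ≤ 2)]
      _ = 2 ^ ((L+1)/2) := by
          congr 1
          field_simp
          ring
  have he : ε ^ (2*β/(2*β+1)) = ε / ε ^ (1/(2*β+1)) := by
    rw [show 2*β/(2*β+1) = 1 - 1/(2*β+1) by field_simp; ring, Real.rpow_sub hε, Real.rpow_one]
  have hdiv : (M/ε) ^ (1/(2*β+1)) = M ^ (1/(2*β+1)) / ε ^ (1/(2*β+1)) :=
    Real.div_rpow hM.le hε.le _
  have hεw : (0:ℝ) < ε ^ (1/(2*β+1)) := Real.rpow_pos_of_pos hε _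
  have h2h : (0:ℝ) < (2:ℝ) ^ (-(1:ℝ)/2) := Real.rpow_pos_of_pos two_pos _
  have key : M ^ (1/(2*β+1)) * 2 ^ (-(1:ℝ)/2) * ε ^ (2*β/(2*β+1))
      = (M/ε) ^ (1/(2*β+1)) * ε * 2 ^ (-(1:ℝ)/2) := by
    rw [he, hdiv]
    field_simp
  rw [key]
  calc (M/ε) ^ (1/(2*β+1)) * ε * 2 ^ (-(1:ℝ)/2)
      ≤ 2 ^ ((L+1)/2) * ε * 2 ^ (-(1:ℝ)/2) := by gcongr
    _ = 2 ^ ((L+1)/2 + -(1:ℝ)/2) * ε := by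
        rw [Real.rpow_add two_pos]
        ring
    _ = 2 ^ (L/2) * ε := by
        congr 2
        ring


/-- in the Gaussian white noise model with Hölder class
`H(β,M) = {f : |f_{lk}| ≤ M 2^{-l(1/2+β)}}`, the modulus of continuity under the supremum
norm (any norm satisfying the standard wavelet lower bound) satisfies
`ω(ε) ≥ c ε^{2β/(2β+1)}` for all small `ε`: there exist `f₁, f₂ ∈ H(β,M)` with
`TV(P_{f₁},P_{f₂}) ≤ ε/(1-ε)` and `‖f₁-f₂‖_∞ ≥ c ε^{2β/(2β+1)}`. -/
theorem stmt15 (β M C₁ : ℝ) (hβ : 0 < β) (hM : 0 < M) (hC₁ : 0 < C₁)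
    (γ : Measure (WIdx → ℝ)) [IsProbabilityMeasure γ]
    (hγ : ∀ s : Finset WIdx,
      γ.map (fun x (i : s) => x i.1) = Measure.pi (fun _ : s => gaussianReal 0 1))
    (supNorm : (WIdx → ℝ) → ℝ)
    (hsup : ∀ f : WIdx → ℝ,
      C₁ * ∑' l : ℕ, 2 ^ ((l : ℝ) / 2) * (⨆ k : Fin (2 ^ l), |f ⟨l, k⟩|) ≤ supNorm f) :
    ∃ c > (0:ℝ), ∃ ε₀ > (0:ℝ), ∀ ε : ℝ, 0 < ε → ε ≤ ε₀ →
      ∃ f₁ f₂ : WIdx → ℝ,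
        (∀ (l : ℕ) (k : Fin (2 ^ l)), |f₁ ⟨l, k⟩| ≤ M * 2 ^ (-(l : ℝ) * (1/2 + β))) ∧
        (∀ (l : ℕ) (k : Fin (2 ^ l)), |f₂ ⟨l, k⟩| ≤ M * 2 ^ (-(l : ℝ) * (1/2 + β))) ∧
        tvDist (γ.map (fun z i => f₁ i + z i)) (γ.map (fun z i => f₂ i + z i)) ≤ ε / (1 - ε) ∧
        c * ε ^ (2 * β / (2 * β + 1)) ≤ supNorm (fun i => f₁ i - f₂ i) := by
  classical
  refine ⟨C₁ * (M ^ (1/(2*β+1)) * 2 ^ (-(1:ℝ)/2)), by positivity, min M (1/2),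
    (lt_min hM (by norm_num)), ?_⟩
  intro ε hε hε0
  have hεM : ε ≤ M := hε0.trans (min_le_left _ _)
  have hεhalf : ε ≤ 1/2 := hε0.trans (min_le_right _ _)
  have ha : (0:ℝ) < 1/2 + β := by linarith
  have hr0 : 0 ≤ Real.logb 2 (M/ε) := Real.logb_nonneg one_lt_two ((one_le_div hε).mpr hεM)
  set l : ℕ := ⌊Real.logb 2 (M/ε) / (1/2 + β)⌋₊ with hldef
  have hfl : (l:ℝ) * (1/2 + β) ≤ Real.logb 2 (M/ε) := by
    have h1 : (l:ℝ) ≤ Real.logb 2 (M/ε) / (1/2 + β) := Nat.floor_le (div_nonneg hr0 ha.le)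
    calc (l:ℝ) * (1/2 + β) ≤ (Real.logb 2 (M/ε) / (1/2 + β)) * (1/2 + β) := by gcongr
      _ = Real.logb 2 (M/ε) := by field_simp
  have hfu : Real.logb 2 (M/ε) < ((l:ℝ) + 1) * (1/2 + β) := by
    have h1 : Real.logb 2 (M/ε) / (1/2 + β) < (l:ℝ) + 1 := by
      exact_mod_cast Nat.lt_floor_add_one (Real.logb 2 (M/ε) / (1/2 + β))
    calc Real.logb 2 (M/ε) = (Real.logb 2 (M/ε) / (1/2 + β)) * (1/2 + β) := by field_simp
      _ < ((l:ℝ) + 1) * (1/2 + β) := by gcongr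
  have hε2 : ε ≤ M * 2 ^ (-(l:ℝ) * (1/2 + β)) := arith1 hM hε ha hfl
  have hpos : 0 < 2 ^ l := pow_pos (by norm_num) l
  set k₀ : Fin (2 ^ l) := ⟨0, hpos⟩ with hk₀
  set i₀ : WIdx := ⟨l, k₀⟩ with hi₀
  set f₂ : WIdx → ℝ := fun i => if i = i₀ then ε else 0 with hf₂
  have hshift0 : Measurable (fun (z : WIdx → ℝ) i => (0:ℝ) + z i) :=
    measurable_pi_lambda _ (fun i => (measurable_pi_apply i).const_add 0)
  have hshift2 : Measurable (fun (z : WIdx → ℝ) i => f₂ i + z i) :=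
    measurable_pi_lambda _ (fun i => by fun_prop)
  refine ⟨fun _ => 0, f₂, ?_, ?_, ?_, ?_⟩
  · intro l' k
    rw [abs_zero]
    positivity
  · intro l' k
    by_cases hik : (⟨l', k⟩ : WIdx) = i₀
    · have hll : l' = l := congrArg Sigma.fst hik
      subst hll
      rw [hf₂]
      simp only [if_pos hik]
      rw [abs_of_pos hε]
      exact hε2
    · rw [hf₂]
      simp only [if_neg hik]
      rw [abs_zero]
      positivity
  · -- TV bound
    set P : Measure (WIdx → ℝ) := γ.map (fun z i => (fun _ => (0:ℝ)) i + z i) with hP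
    set Q : Measure (WIdx → ℝ) := γ.map (fun z i => f₂ i + z i) with hQ
    haveI : IsProbabilityMeasure P := Measure.isProbabilityMeasure_map hshift0.aemeasurable
    haveI : IsProbabilityMeasure Q := Measure.isProbabilityMeasure_map hshift2.aemeasurable
    have halg : MeasureTheory.IsSetAlgebra (measurableCylinders (fun _ : WIdx => ℝ)) :=
      ⟨empty_mem_measurableCylinders _, fun {s} hs => compl_mem_measurableCylinders hs,
        fun {s t} hs ht => union_mem_measurableCylinders hs ht⟩
    have hgen : (inferInstance : MeasurableSpace (WIdx → ℝ))
        = MeasurableSpace.generateFrom (measurableCylinders (fun _ : WIdx => ℝ)) :=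
      generateFrom_measurableCylinders.symm
    have key : ∀ B : Set (WIdx → ℝ), MeasurableSet B →
        P B ≤ Q B + ENNReal.ofReal ε ∧ Q B ≤ P B + ENNReal.ofReal ε := by
      intro B hB
      constructor
      · exact approx_bound halg hgen
          (fun C hC => (cyl_bound γ hγ hε i₀ C hC).1) hB
      · exact approx_bound halg hgen
          (fun C hC => (cyl_bound γ hγ hε i₀ C hC).2) hB
    have h1ε : 0 < 1 - ε := by linarith
    haveI : Nonempty {B : Set (WIdx → ℝ) // MeasurableSet B} := ⟨⟨∅, MeasurableSet.empty⟩⟩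
    have htv : tvDist P Q ≤ ε := by
      refine ciSup_le (fun B => ?_)
      exact toReal_abs_bound hε.le (key B.1 B.2).1 (key B.1 B.2).2
    refine htv.trans ?_
    rw [le_div_iff₀ h1ε]
    nlinarith
  · -- supNorm bound
    refine le_trans ?_ (hsup _)
    have habs : ∀ i : WIdx, |(fun _ => (0:ℝ)) i - f₂ i| = if i = i₀ then ε else 0 := by
      intro i
      by_cases h : i = i₀
      · simp [hf₂, h, abs_of_pos hε]
      · simp [hf₂, h]
    have hne : ∀ l' : ℕ, l' ≠ l → ∀ k : Fin (2 ^ l'), (⟨l', k⟩ : WIdx) ≠ i₀ := by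
      intro l' hl' k hik
      exact hl' (congrArg Sigma.fst hik)
    have hsupk : ∀ l' : ℕ, l' ≠ l →
        (2:ℝ) ^ ((l' : ℝ) / 2)
          * (⨆ k : Fin (2 ^ l'), |(fun _ => (0:ℝ)) (⟨l', k⟩ : WIdx) - f₂ ⟨l', k⟩|)
          = 0 := by
      intro l' hl'
      have : (⨆ k : Fin (2 ^ l'), |(fun _ => (0:ℝ)) (⟨l', k⟩ : WIdx) - f₂ ⟨l', k⟩|) = 0 := by
        have : ∀ k : Fin (2 ^ l'), |(fun _ => (0:ℝ)) (⟨l', k⟩ : WIdx) - f₂ ⟨l', k⟩| = 0 := by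
          intro k
          rw [habs, if_neg (hne l' hl' k)]
        simp only [this]
        exact ciSup_const
      rw [this, mul_zero]
    have hsupl : (⨆ k : Fin (2 ^ l), |(fun _ => (0:ℝ)) (⟨l, k⟩ : WIdx) - f₂ ⟨l, k⟩|) = ε := by
      refine le_antisymm (ciSup_le (fun k => ?_)) ?_
      · rw [habs]
        split_ifs
        · exact le_rfl
        · exact hε.le
      · have hle := le_ciSup (f := fun k : Fin (2 ^ l) =>
          |(fun _ => (0:ℝ)) (⟨l, k⟩ : WIdx) - f₂ ⟨l, k⟩|)
          (Set.Finite.bddAbove (Set.finite_range _)) k₀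
        rwa [habs, if_pos rfl] at hle
    have htsum : (∑' l' : ℕ, (2:ℝ) ^ ((l' : ℝ) / 2)
        * (⨆ k : Fin (2 ^ l'), |(fun _ => (0:ℝ)) (⟨l', k⟩ : WIdx) - f₂ ⟨l', k⟩|))
        = 2 ^ ((l : ℝ) / 2) * ε := by
      rw [tsum_eq_single l (fun l' hl' => hsupk l' hl')]
      rw [hsupl]
    rw [htsum, mul_assoc]
    exact mul_le_mul_of_nonneg_left (arith2 hβ hM hε hfu) hC₁.le
end
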